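/- arXiv:2605.30890 — 4 statements merged into one kernel-verified Lean document; each statement's English description precedes it below -/
import Mathlib

section
/- Let Ã, B, L be as in the model and set M₀ = L(I-Ã)⁻¹B and Â = à + BL. Then λ_max(M₀) < 1 if and only if λ_max(Â) < 1. -/
open Matrix
open scoped ENNReal NNReal

set_option synthInstance.maxHeartbeats 1000000
set_option maxHeartbeats 1000000

/-- Spectral radius of a real square matrix: the supremum of the absolute values
of its complex eigenvalues. -/
noncomputable def specRad {n : ℕ} (M : Matrix (Fin n) (Fin n) ℝ) : ℝ :=
  sSup {r : ℝ | ∃ μ : ℂ, μ ∈ spectrum ℂ (M.map (algebraMap ℝ ℂ)) ∧ r = ‖μ‖}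

/-- Irreducibility of a nonnegative matrix: every entry communicates with
every other through some power. -/
def MatIrred {n : ℕ} (A : Matrix (Fin n) (Fin n) ℝ) : Prop :=
  ∀ i j, ∃ k : ℕ, 0 < k ∧ 0 < (A ^ k) i j

namespace SpecAux

variable {n : ℕ}

attribute [local instance] Matrix.linftyOpNormedRing Matrix.linftyOpNormedAlgebra
  Matrix.linftyOpNormedAddCommGroup

noncomputable local instance : CompleteSpace (Matrix (Fin n) (Fin n) ℂ) :=
  FiniteDimensional.complete ℂ (Matrix (Fin n) (Fin n) ℂ)

/-- Complexification of a real matrix. -/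
noncomputable def cmap (M : Matrix (Fin n) (Fin n) ℝ) : Matrix (Fin n) (Fin n) ℂ :=
  M.map (algebraMap ℝ ℂ)

lemma cmap_pow (M : Matrix (Fin n) (Fin n) ℝ) (k : ℕ) : cmap (M ^ k) = (cmap M) ^ k := by
  simpa [cmap] using map_pow ((algebraMap ℝ ℂ).mapMatrix) M k

/-- Collatz–Wielandt style bound: a positive sub-invariant vector bounds all eigenvalues. -/
lemma specRad_le_of_testvec {M : Matrix (Fin n) (Fin n) ℝ} (hM : ∀ i j, 0 ≤ M i j)
    {x : Fin n → ℝ} (hx : ∀ i, 0 < x i) {c : ℝ} (hc : 0 ≤ c)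
    (h : ∀ i, (M *ᵥ x) i ≤ c * x i) : specRad M ≤ c := by
  apply Real.sSup_le _ hc
  rintro r ⟨μ, hμ, rfl⟩
  rw [spectrum.mem_iff] at hμ
  rw [Matrix.isUnit_iff_isUnit_det, isUnit_iff_ne_zero, not_ne_iff,
    ← Matrix.exists_mulVec_eq_zero_iff] at hμ
  obtain ⟨v, hv0, hv⟩ := hμ
  have heig : ∀ i, μ * v i = ∑ j, (M i j : ℂ) * v j := by
    intro i
    have := congrFun hv i
    rw [Algebra.algebraMap_eq_smul_one] at this
    simp only [Matrix.sub_mulVec, Matrix.smul_mulVec, Matrix.one_mulVec,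
      Pi.sub_apply, Pi.smul_apply, smul_eq_mul, Pi.zero_apply, sub_eq_zero] at this
    rw [this]
    simp [Matrix.mulVec, dotProduct, Matrix.map_apply]
  obtain ⟨j₀, hj₀⟩ : ∃ j, v j ≠ 0 := Function.ne_iff.mp hv0
  have hne : (Finset.univ : Finset (Fin n)).Nonempty := ⟨j₀, Finset.mem_univ _⟩
  obtain ⟨i, -, hi⟩ := Finset.exists_mem_eq_sup' hne (fun j => ‖v j‖ / x j)
  set t := Finset.univ.sup' hne (fun j => ‖v j‖ / x j) with ht
  have htj : ∀ j, ‖v j‖ ≤ t * x j := by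
    intro j
    have := Finset.le_sup' (fun j => ‖v j‖ / x j) (Finset.mem_univ j)
    rw [← ht] at this
    calc ‖v j‖ = (‖v j‖ / x j) * x j := (div_mul_cancel₀ _ (hx j).ne').symm
    _ ≤ t * x j := mul_le_mul_of_nonneg_right this (hx j).le
  have htpos : 0 < t := by
    have := Finset.le_sup' (fun j => ‖v j‖ / x j) (Finset.mem_univ j₀)
    rw [← ht] at this
    exact lt_of_lt_of_le (div_pos (norm_pos_iff.mpr hj₀) (hx j₀)) this
  have hvi : ‖v i‖ = t * x i := by
    rw [hi, div_mul_cancel₀ _ (hx i).ne']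
  have key : ‖μ‖ * (t * x i) ≤ t * (c * x i) := by
    rw [← hvi, ← norm_mul, heig i]
    calc ‖∑ j, (M i j : ℂ) * v j‖ ≤ ∑ j, ‖(M i j : ℂ) * v j‖ := norm_sum_le _ _
    _ = ∑ j, M i j * ‖v j‖ := by
        refine Finset.sum_congr rfl fun j _ => ?_
        rw [norm_mul, Complex.norm_real, Real.norm_eq_abs, abs_of_nonneg (hM i j)]
    _ ≤ ∑ j, M i j * (t * x j) :=
        Finset.sum_le_sum fun j _ => mul_le_mul_of_nonneg_left (htj j) (hM i j)
    _ = t * ∑ j, M i j * x j := by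
        rw [Finset.mul_sum]; exact Finset.sum_congr rfl fun j _ => by ring
    _ = t * (M *ᵥ x) i := by rw [Matrix.mulVec, dotProduct]
    _ ≤ t * (c * x i) := mul_le_mul_of_nonneg_left (h i) htpos.le
  have hpos : 0 < t * x i := mul_pos htpos (hx i)
  have := le_of_mul_le_mul_right (by linarith [key] : ‖μ‖ * (t * x i) ≤ c * (t * x i)) hpos
  simpa using this

lemma spectralRadius_lt_one {M : Matrix (Fin n) (Fin n) ℝ} (h : specRad M < 1) :
    spectralRadius ℂ (cmap M) < 1 := by
  have hbdd : BddAbove {r : ℝ | ∃ μ : ℂ, μ ∈ spectrum ℂ (cmap M) ∧ r = ‖μ‖} := by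
    refine ⟨‖cmap M‖ * ‖(1 : Matrix (Fin n) (Fin n) ℂ)‖, ?_⟩
    rintro r ⟨μ, hμ, rfl⟩
    simpa using spectrum.norm_le_norm_mul_of_mem hμ
  have hle : spectralRadius ℂ (cmap M) ≤ ENNReal.ofReal (specRad M) := by
    rw [spectralRadius]
    refine iSup₂_le fun μ hμ => ?_
    have h1 : ‖μ‖ ≤ specRad M := le_csSup hbdd ⟨μ, hμ, rfl⟩
    rw [← enorm_eq_nnnorm, ← ofReal_norm]
    exact ENNReal.ofReal_le_ofReal (by simpa using h1)
  exact lt_of_le_of_lt hle (ENNReal.ofReal_lt_one.mpr h)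

lemma summable_norm_pow {M : Matrix (Fin n) (Fin n) ℝ} (h : specRad M < 1) :
    Summable (fun k : ℕ => ‖(cmap M) ^ k‖) := by
  have hρ := spectralRadius_lt_one h
  obtain ⟨r, hρr, hr1⟩ := ENNReal.lt_iff_exists_nnreal_btwn.mp hρ
  have hgel := spectrum.pow_nnnorm_pow_one_div_tendsto_nhds_spectralRadius (cmap M)
  have hev : ∀ᶠ (k : ℕ) in Filter.atTop,
      ((‖(cmap M) ^ k‖₊ : ℝ≥0∞) ^ (1 / (k : ℝ))) < (r : ℝ≥0∞) :=
    hgel.eventually_lt_const hρr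
  obtain ⟨N, hN⟩ := hev.exists_forall_of_atTop
  have hbound : ∀ k, N ≤ k → 1 ≤ k → ‖(cmap M) ^ k‖ ≤ (r : ℝ) ^ k := by
    intro k hk hk1
    have h1 := hN k hk
    have hkne : (k : ℝ) ≠ 0 := Nat.cast_ne_zero.mpr (by omega)
    have h2 : (‖(cmap M) ^ k‖₊ : ℝ≥0∞) ≤ ((r : ℝ≥0∞)) ^ ((k : ℕ) : ℝ) := by
      have h3 := ENNReal.rpow_le_rpow h1.le (by positivity : (0:ℝ) ≤ (k:ℝ))
      rwa [← ENNReal.rpow_mul, one_div, inv_mul_cancel₀ hkne, ENNReal.rpow_one] at h3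
    rw [ENNReal.rpow_natCast, ← ENNReal.coe_pow, ENNReal.coe_le_coe] at h2
    calc ‖(cmap M) ^ k‖ = ((‖(cmap M) ^ k‖₊ : ℝ)) := rfl
    _ ≤ ((r ^ k : ℝ≥0) : ℝ) := by exact_mod_cast h2
    _ = (r : ℝ) ^ k := by push_cast; ring
  have hr1' : (r : ℝ) < 1 := by exact_mod_cast hr1
  have hgeo : Summable (fun k : ℕ => (r : ℝ) ^ k) :=
    summable_geometric_of_lt_one r.coe_nonneg hr1'
  set K := max N 1 with hK
  rw [← summable_nat_add_iff K]
  refine Summable.of_nonneg_of_le (fun k => norm_nonneg _)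
    (fun k => hbound (k + K) (by omega) (by omega)) ?_
  exact (summable_nat_add_iff K).mpr hgeo

lemma entry_norm_le_norm (M : Matrix (Fin n) (Fin n) ℂ) (i j : Fin n) :
    ‖M i j‖ ≤ ‖M‖ := by
  have h1 : ‖M i j‖₊ ≤ ∑ k, ‖M i k‖₊ :=
    Finset.single_le_sum (f := fun k => ‖M i k‖₊) (fun _ _ => zero_le) (Finset.mem_univ j)
  have h2 : (∑ k, ‖M i k‖₊) ≤ Finset.univ.sup fun i : Fin n => ∑ j, ‖M i j‖₊ :=
    Finset.le_sup (f := fun i : Fin n => ∑ j, ‖M i j‖₊) (Finset.mem_univ i)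
  have := h1.trans h2
  rw [Matrix.linfty_opNorm_def]
  exact_mod_cast this

lemma summable_pow_entry {M : Matrix (Fin n) (Fin n) ℝ} (h : specRad M < 1) (i j : Fin n) :
    Summable (fun k : ℕ => (M ^ k) i j) := by
  refine Summable.of_norm_bounded (summable_norm_pow h) fun k => ?_
  have hc : ((M ^ k) i j : ℂ) = ((cmap M) ^ k) i j := by
    rw [← cmap_pow]; rfl
  calc ‖(M ^ k) i j‖ = ‖((M ^ k) i j : ℂ)‖ := by rw [Complex.norm_real]
  _ = ‖((cmap M) ^ k) i j‖ := by rw [hc]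
  _ ≤ ‖(cmap M) ^ k‖ := entry_norm_le_norm _ i j

lemma pow_entry_nonneg {M : Matrix (Fin n) (Fin n) ℝ} (hM0 : ∀ i j, 0 ≤ M i j) :
    ∀ (k : ℕ) (i j : Fin n), 0 ≤ (M ^ k) i j := by
  intro k
  induction k with
  | zero => intro i j; rw [pow_zero]; by_cases hij : i = j <;> simp [Matrix.one_apply, hij]
  | succ m ih =>
      intro i j
      rw [pow_succ, Matrix.mul_apply]
      exact Finset.sum_nonneg fun m' _ => mul_nonneg (ih i m') (hM0 m' j)

/-- Inverse of `1 - M` as a Neumann series, entrywise. -/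
noncomputable def neumann (M : Matrix (Fin n) (Fin n) ℝ) : Matrix (Fin n) (Fin n) ℝ :=
  Matrix.of fun i j => ∑' k : ℕ, (M ^ k) i j

lemma neumann_nonneg {M : Matrix (Fin n) (Fin n) ℝ} (hM0 : ∀ i j, 0 ≤ M i j) (i j : Fin n) :
    0 ≤ neumann M i j :=
  tsum_nonneg fun k => pow_entry_nonneg hM0 k i j

lemma pow_entry_le_neumann {M : Matrix (Fin n) (Fin n) ℝ} (hM0 : ∀ i j, 0 ≤ M i j)
    (h : specRad M < 1) (k : ℕ) (i j : Fin n) : (M ^ k) i j ≤ neumann M i j :=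
  Summable.le_tsum (summable_pow_entry h i j) k fun m _ => pow_entry_nonneg hM0 m i j

lemma mul_neumann {M : Matrix (Fin n) (Fin n) ℝ} (h : specRad M < 1) :
    M * neumann M = neumann M - 1 := by
  ext i j
  rw [Matrix.mul_apply, Matrix.sub_apply]
  have hsum : ∀ m : Fin n, Summable fun k : ℕ => M i m * (M ^ k) m j :=
    fun m => (summable_pow_entry h m j).mul_left _
  calc ∑ m, M i m * neumann M m j = ∑ m, ∑' k : ℕ, M i m * (M ^ k) m j := by
        refine Finset.sum_congr rfl fun m _ => ?_
        rw [neumann, Matrix.of_apply, ← tsum_mul_left]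
  _ = ∑' k : ℕ, ∑ m, M i m * (M ^ k) m j :=
        (Summable.tsum_finsetSum fun m _ => hsum m).symm
  _ = ∑' k : ℕ, (M ^ (k + 1)) i j := by
        refine tsum_congr fun k => ?_
        rw [pow_succ', Matrix.mul_apply]
  _ = neumann M i j - (1 : Matrix (Fin n) (Fin n) ℝ) i j := by
        have h0 := Summable.tsum_eq_zero_add (summable_pow_entry h i j)
        rw [neumann, Matrix.of_apply, h0, pow_zero]
        ring

lemma neumann_mul {M : Matrix (Fin n) (Fin n) ℝ} (h : specRad M < 1) :
    neumann M * M = neumann M - 1 := by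
  ext i j
  rw [Matrix.mul_apply, Matrix.sub_apply]
  have hsum : ∀ m : Fin n, Summable fun k : ℕ => (M ^ k) i m * M m j :=
    fun m => (summable_pow_entry h i m).mul_right _
  calc ∑ m, neumann M i m * M m j = ∑ m, ∑' k : ℕ, (M ^ k) i m * M m j := by
        refine Finset.sum_congr rfl fun m _ => ?_
        rw [neumann, Matrix.of_apply, ← tsum_mul_right]
  _ = ∑' k : ℕ, ∑ m, (M ^ k) i m * M m j :=
        (Summable.tsum_finsetSum fun m _ => hsum m).symm
  _ = ∑' k : ℕ, (M ^ (k + 1)) i j := by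
        refine tsum_congr fun k => ?_
        rw [pow_succ, Matrix.mul_apply]
  _ = neumann M i j - (1 : Matrix (Fin n) (Fin n) ℝ) i j := by
        have h0 := Summable.tsum_eq_zero_add (summable_pow_entry h i j)
        rw [neumann, Matrix.of_apply, h0, pow_zero]
        ring

lemma inv_one_sub_eq_neumann {M : Matrix (Fin n) (Fin n) ℝ} (h : specRad M < 1) :
    (1 - M)⁻¹ = neumann M := by
  apply Matrix.inv_eq_right_inv
  rw [sub_mul, one_mul, mul_neumann h, sub_sub_cancel]

lemma mulVec_le_mulVec {P : Matrix (Fin n) (Fin n) ℝ} (hP : ∀ i j, 0 ≤ P i j)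
    {u v : Fin n → ℝ} (huv : ∀ i, u i ≤ v i) (i : Fin n) : (P *ᵥ u) i ≤ (P *ᵥ v) i := by
  simp only [Matrix.mulVec, dotProduct]
  exact Finset.sum_le_sum fun j _ => mul_le_mul_of_nonneg_left (huv j) (hP i j)

lemma mulVec_nonneg {P : Matrix (Fin n) (Fin n) ℝ} (hP : ∀ i j, 0 ≤ P i j)
    {u : Fin n → ℝ} (hu : ∀ i, 0 ≤ u i) (i : Fin n) : 0 ≤ (P *ᵥ u) i := by
  simp only [Matrix.mulVec, dotProduct]
  exact Finset.sum_nonneg fun j _ => mul_nonneg (hP i j) (hu j)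

lemma pow_entry_le_pow_entry {P Q : Matrix (Fin n) (Fin n) ℝ} (hP : ∀ i j, 0 ≤ P i j)
    (hPQ : ∀ i j, P i j ≤ Q i j) (k : ℕ) : ∀ i j, (P ^ k) i j ≤ (Q ^ k) i j := by
  induction k with
  | zero => intro i j; simp
  | succ m ih =>
      intro i j
      rw [pow_succ, pow_succ, Matrix.mul_apply, Matrix.mul_apply]
      refine Finset.sum_le_sum fun m' _ => ?_
      exact mul_le_mul (ih i m') (hPQ m' j) (hP m' j)
        (le_trans (pow_entry_nonneg hP m i m') (ih i m'))

lemma mul_entry_nonneg {P Q : Matrix (Fin n) (Fin n) ℝ} (hP : ∀ i j, 0 ≤ P i j)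
    (hQ : ∀ i j, 0 ≤ Q i j) : ∀ i j, 0 ≤ (P * Q) i j := by
  intro i j
  rw [Matrix.mul_apply]
  exact Finset.sum_nonneg fun m _ => mul_nonneg (hP i m) (hQ m j)

/-- `P *ᵥ (a • v + b • w) = a • P *ᵥ v + b • P *ᵥ w`, pointwise form. -/
lemma mulVec_combo (P : Matrix (Fin n) (Fin n) ℝ) (a b : ℝ) (v w : Fin n → ℝ) (i : Fin n) :
    (P *ᵥ (fun j => a * v j + b * w j)) i = a * (P *ᵥ v) i + b * (P *ᵥ w) i := by
  simp only [Matrix.mulVec, dotProduct, Finset.mul_sum]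
  rw [← Finset.sum_add_distrib]
  exact Finset.sum_congr rfl fun j _ => by ring

/-- From `specRad M < 1` we get a positive vector `x` with `M x ≤ c x`, `0 ≤ c < 1`. -/
lemma exists_testvec {M : Matrix (Fin n) (Fin n) ℝ} (hM0 : ∀ i j, 0 ≤ M i j)
    (h : specRad M < 1) :
    ∃ x : Fin n → ℝ, (∀ i, 0 < x i) ∧ ∃ c : ℝ, 0 ≤ c ∧ c < 1 ∧ ∀ i, (M *ᵥ x) i ≤ c * x i := by
  rcases Nat.eq_zero_or_pos n with hn | hn
  · subst hn
    exact ⟨fun _ => 1, fun i => i.elim0, 0, le_refl 0, one_pos, fun i => i.elim0⟩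
  set E := neumann M with hE
  set x : Fin n → ℝ := E *ᵥ (fun _ => 1) with hx
  have hx1 : ∀ i, 1 ≤ x i := by
    intro i
    have hdiag : 1 ≤ E i i := by
      have : ((M ^ 0) i i : ℝ) ≤ ∑' k : ℕ, (M ^ k) i i :=
        Summable.le_tsum (summable_pow_entry h i i) 0 fun m _ => pow_entry_nonneg hM0 m i i
      simpa [hE, neumann] using this
    calc (1 : ℝ) ≤ E i i := hdiag
    _ ≤ ∑ j, E i j * 1 := by
        refine Finset.single_le_sum (f := fun j => E i j * 1) ?_
          (Finset.mem_univ i) |>.trans_eq' (by ring_nf)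
        exact fun j _ => by simpa using neumann_nonneg hM0 i j
    _ = x i := by rw [hx]; simp [Matrix.mulVec, dotProduct]
  have hxpos : ∀ i, 0 < x i := fun i => lt_of_lt_of_le one_pos (hx1 i)
  have hMx : ∀ i, (M *ᵥ x) i = x i - 1 := by
    intro i
    have hmm : M *ᵥ x = (M * E) *ᵥ (fun _ => 1) := by rw [hx, mulVec_mulVec]
    rw [hmm, mul_neumann h, ← hE, Matrix.sub_mulVec]
    simp [hx, Matrix.mulVec, dotProduct, Matrix.one_apply]
  have hne : (Finset.univ : Finset (Fin n)).Nonempty := ⟨⟨0, hn⟩, Finset.mem_univ _⟩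
  set K := Finset.univ.sup' hne x with hK
  have hKx : ∀ i, x i ≤ K := fun i => Finset.le_sup' x (Finset.mem_univ i)
  have hK1 : 1 ≤ K := le_trans (hx1 ⟨0, hn⟩) (hKx ⟨0, hn⟩)
  have hKpos : 0 < K := lt_of_lt_of_le one_pos hK1
  refine ⟨x, hxpos, 1 - 1 / K, ?_, ?_, ?_⟩
  · have : 1 / K ≤ 1 := by rw [div_le_one hKpos]; exact hK1
    linarith
  · have : 0 < 1 / K := by positivity
    linarith
  · intro i
    rw [hMx i]
    have h2 : (1 - 1 / K) * x i = x i - x i / K := by ring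
    rw [h2]
    have h3 : x i / K ≤ 1 := by rw [div_le_one hKpos]; exact hKx i
    linarith

lemma specRad_fin_zero (M : Matrix (Fin 0) (Fin 0) ℝ) : specRad M = 0 := by
  have : {r : ℝ | ∃ μ : ℂ, μ ∈ spectrum ℂ (M.map (algebraMap ℝ ℂ)) ∧ r = ‖μ‖} = ∅ := by
    ext r
    simp only [Set.mem_setOf_eq, Set.mem_empty_iff_false, iff_false, not_exists]
    rintro μ ⟨hμ, -⟩
    rw [spectrum.mem_iff] at hμ
    exact hμ (isUnit_of_subsingleton _)
  rw [specRad, this, Real.sSup_empty]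

end SpecAux

open SpecAux in
theorem specRad_M0_iff_specRad_Ahat {n : ℕ}
    (A B : Matrix (Fin n) (Fin n) ℝ) (l : Fin n → ℝ)
    (hA0 : ∀ i j, 0 ≤ A i j) (hAirr : MatIrred A) (hAspec : specRad A < 1)
    (hl : ∀ j, 0 < l j)
    (hB0 : ∀ i j, 0 ≤ B i j) (hBcol : ∀ j, ∃ i, 0 < B i j) :
    specRad (Matrix.diagonal l * (1 - A)⁻¹ * B) < 1 ↔
      specRad (A + B * Matrix.diagonal l) < 1 := by
  rcases Nat.eq_zero_or_pos n with hn | hn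
  · subst hn
    rw [specRad_fin_zero, specRad_fin_zero]
  -- setup
  rw [inv_one_sub_eq_neumann hAspec]
  set L : Matrix (Fin n) (Fin n) ℝ := Matrix.diagonal l with hLdef
  set E : Matrix (Fin n) (Fin n) ℝ := neumann A with hEdef
  set M₀ : Matrix (Fin n) (Fin n) ℝ := L * E * B with hM₀def
  set D : Matrix (Fin n) (Fin n) ℝ := B * L with hDdef
  set Ah : Matrix (Fin n) (Fin n) ℝ := A + D with hAhdef
  have hL0 : ∀ i j, 0 ≤ L i j := by
    intro i j
    rw [hLdef, Matrix.diagonal_apply]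
    split
    · exact (hl i).le
    · exact le_refl 0
  have hE0 : ∀ i j, 0 ≤ E i j := neumann_nonneg hA0
  have hD0 : ∀ i j, 0 ≤ D i j := mul_entry_nonneg hB0 hL0
  have hAh0 : ∀ i j, 0 ≤ Ah i j := by
    intro i j
    rw [hAhdef, Matrix.add_apply]
    exact add_nonneg (hA0 i j) (hD0 i j)
  have hM₀0 : ∀ i j, 0 ≤ M₀ i j := mul_entry_nonneg (mul_entry_nonneg hL0 hE0) hB0
  have hAE : A * E = E - 1 := mul_neumann hAspec
  have hEA : E * A = E - 1 := neumann_mul hAspec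
  -- E dominates the identity on nonnegative vectors
  have hEx_ge : ∀ (u : Fin n → ℝ), (∀ i, 0 ≤ u i) → ∀ i, u i ≤ (E *ᵥ u) i := by
    intro u hu i
    have h7 : ((A * E) *ᵥ u) i = (E *ᵥ u) i - u i := by
      rw [hAE, Matrix.sub_mulVec, Matrix.one_mulVec]; simp
    have h8 := mulVec_nonneg (mul_entry_nonneg hA0 hE0) hu i
    linarith
  -- the useful decomposition  M₀ *ᵥ (L *ᵥ w) = L *ᵥ (E *ᵥ (D *ᵥ w))
  constructor
  · -- specRad M₀ < 1 → specRad Ah < 1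
    intro hM₀
    obtain ⟨y, hypos, c, hc0, hc1, hyc⟩ := exists_testvec hM₀0 hM₀
    set u : Fin n → ℝ := B *ᵥ y with hu
    have hu0 : ∀ i, 0 ≤ u i := mulVec_nonneg hB0 (fun i => (hypos i).le)
    obtain ⟨i1, hi1⟩ := hBcol ⟨0, hn⟩
    have hui1 : 0 < u i1 := by
      have hle : B i1 ⟨0, hn⟩ * y ⟨0, hn⟩ ≤ u i1 := by
        rw [hu]
        simp only [Matrix.mulVec, dotProduct]
        exact Finset.single_le_sum (f := fun j => B i1 j * y j)
          (fun j _ => mul_nonneg (hB0 i1 j) (hypos j).le) (Finset.mem_univ _)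
      exact lt_of_lt_of_le (mul_pos hi1 (hypos ⟨0, hn⟩)) hle
    set x : Fin n → ℝ := E *ᵥ u with hxdef
    have hx0 : ∀ i, 0 ≤ x i := mulVec_nonneg hE0 hu0
    have hEpos : ∀ i j, 0 < E i j := by
      intro i j
      obtain ⟨k, -, hk⟩ := hAirr i j
      exact lt_of_lt_of_le hk (pow_entry_le_neumann hA0 hAspec k i j)
    have hxpos : ∀ i, 0 < x i := by
      intro i
      have hle : E i i1 * u i1 ≤ x i := by
        rw [hxdef]
        simp only [Matrix.mulVec, dotProduct]
        exact Finset.single_le_sum (f := fun j => E i j * u j)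
          (fun j _ => mul_nonneg (hE0 i j) (hu0 j)) (Finset.mem_univ _)
      exact lt_of_lt_of_le (mul_pos (hEpos i i1) hui1) hle
    -- A *ᵥ x = x - u
    have hAx : ∀ i, (A *ᵥ x) i = x i - u i := by
      intro i
      have : A *ᵥ x = (A * E) *ᵥ u := by rw [hxdef, mulVec_mulVec]
      rw [this, hAE, Matrix.sub_mulVec, Matrix.one_mulVec]
      simp [hxdef]
    -- D *ᵥ x ≤ c • u
    have hDx : ∀ i, (D *ᵥ x) i ≤ c * u i := by
      intro i
      have hDxv : D *ᵥ x = B *ᵥ (M₀ *ᵥ y) := by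
        rw [hDdef, hxdef, hu, hM₀def]
        simp only [mulVec_mulVec, Matrix.mul_assoc]
      rw [hDxv]
      have h1 : (B *ᵥ (M₀ *ᵥ y)) i ≤ (B *ᵥ (fun j => c * y j)) i :=
        mulVec_le_mulVec hB0 hyc i
      have h2 : (B *ᵥ (fun j => c * y j)) i = c * u i := by
        have := mulVec_combo B c 0 y y i
        simpa [hu] using this
      rw [← h2]; exact h1
    have hkey : ∀ i, (Ah *ᵥ x) i ≤ x i - (1 - c) * u i := by
      intro i
      rw [hAhdef, Matrix.add_mulVec]
      have := hDx i
      have h1 := hAx i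
      simp only [Pi.add_apply]
      rw [h1]
      linarith [hDx i]
    -- iterate
    have hpow : ∀ (k : ℕ) (i : Fin n),
        ((Ah ^ (k + 1)) *ᵥ x) i ≤ ((Ah ^ k) *ᵥ x) i - (1 - c) * ((Ah ^ k) *ᵥ u) i := by
      intro k i
      have h1 : (Ah ^ (k + 1)) *ᵥ x = (Ah ^ k) *ᵥ (Ah *ᵥ x) := by
        rw [pow_succ]
        exact (Matrix.mulVec_mulVec x (Ah ^ k) Ah).symm
      rw [h1]
      have h2 : ((Ah ^ k) *ᵥ (Ah *ᵥ x)) i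
          ≤ ((Ah ^ k) *ᵥ (fun j => 1 * x j + (-(1 - c)) * u j)) i := by
        refine mulVec_le_mulVec (pow_entry_nonneg hAh0 k) (fun j => ?_) i
        have := hkey j
        linarith [hkey j]
      have h3 := mulVec_combo (Ah ^ k) 1 (-(1 - c)) x u i
      rw [h3] at h2
      linarith [h2]
    -- choose N via irreducibility
    choose kk hkkpos hkkval using fun i => hAirr i i1
    set N := Finset.univ.sup kk with hN
    set x' : Fin n → ℝ := fun i => ∑ k ∈ Finset.range (N + 1), ((Ah ^ k) *ᵥ x) i with hx'
    set v' : Fin n → ℝ := fun i => ∑ k ∈ Finset.range (N + 1), ((Ah ^ k) *ᵥ u) i with hv'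
    have hterm_x : ∀ k i, 0 ≤ ((Ah ^ k) *ᵥ x) i :=
      fun k i => mulVec_nonneg (pow_entry_nonneg hAh0 k) hx0 i
    have hterm_u : ∀ k i, 0 ≤ ((Ah ^ k) *ᵥ u) i :=
      fun k i => mulVec_nonneg (pow_entry_nonneg hAh0 k) hu0 i
    have hx'pos : ∀ i, 0 < x' i := by
      intro i
      have h0mem : 0 ∈ Finset.range (N + 1) := Finset.mem_range.mpr (by omega)
      have hle : ((Ah ^ 0) *ᵥ x) i ≤ x' i :=
        Finset.single_le_sum (f := fun k => ((Ah ^ k) *ᵥ x) i)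
          (fun k _ => hterm_x k i) h0mem
      have : ((Ah ^ 0) *ᵥ x) i = x i := by rw [pow_zero, Matrix.one_mulVec]
      rw [this] at hle
      exact lt_of_lt_of_le (hxpos i) hle
    have hv'pos : ∀ i, 0 < v' i := by
      intro i
      have hkmem : kk i ∈ Finset.range (N + 1) :=
        Finset.mem_range.mpr (Nat.lt_succ_of_le (Finset.le_sup (Finset.mem_univ i)))
      have hle : ((Ah ^ kk i) *ᵥ u) i ≤ v' i :=
        Finset.single_le_sum (f := fun k => ((Ah ^ k) *ᵥ u) i)
          (fun k _ => hterm_u k i) hkmem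
      have hentry : (A ^ kk i) i i1 ≤ (Ah ^ kk i) i i1 := by
        refine pow_entry_le_pow_entry hA0 (fun a b => ?_) (kk i) i i1
        rw [hAhdef, Matrix.add_apply]
        linarith [hD0 a b]
      have hterm : (A ^ kk i) i i1 * u i1 ≤ ((Ah ^ kk i) *ᵥ u) i := by
        have hsingle : (Ah ^ kk i) i i1 * u i1 ≤ ((Ah ^ kk i) *ᵥ u) i := by
          simp only [Matrix.mulVec, dotProduct]
          exact Finset.single_le_sum (f := fun j => (Ah ^ kk i) i j * u j)
            (fun j _ => mul_nonneg (pow_entry_nonneg hAh0 (kk i) i j) (hu0 j))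
            (Finset.mem_univ _)
        exact le_trans (mul_le_mul_of_nonneg_right hentry (hu0 i1)) hsingle
      exact lt_of_lt_of_le (lt_of_lt_of_le (mul_pos (hkkval i) hui1) hterm) hle
    have hstep : ∀ i, (Ah *ᵥ x') i ≤ x' i - (1 - c) * v' i := by
      intro i
      have hps : ∀ k : ℕ, Ah *ᵥ ((Ah ^ k) *ᵥ x) = (Ah ^ (k + 1)) *ᵥ x := fun k => by
        rw [pow_succ']
        exact Matrix.mulVec_mulVec x Ah (Ah ^ k)
      have hsum : (Ah *ᵥ x') i = ∑ k ∈ Finset.range (N + 1), ((Ah ^ (k + 1)) *ᵥ x) i := by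
        have e1 : (Ah *ᵥ x') i
            = ∑ k ∈ Finset.range (N + 1), (Ah *ᵥ ((Ah ^ k) *ᵥ x)) i := by
          simp only [hx', Matrix.mulVec, dotProduct, Finset.mul_sum]
          exact Finset.sum_comm
        rw [e1]
        exact Finset.sum_congr rfl fun k _ => congrFun (hps k) i
      rw [hsum, hx', hv']
      have := Finset.sum_le_sum (fun k (_ : k ∈ Finset.range (N + 1)) => hpow k i)
      rw [Finset.sum_sub_distrib] at this
      rw [Finset.mul_sum]
      linarith [this]
    -- conclude
    have hne : (Finset.univ : Finset (Fin n)).Nonempty := ⟨⟨0, hn⟩, Finset.mem_univ _⟩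
    set ε := Finset.univ.inf' hne (fun i => v' i / x' i) with hε
    have hεpos : 0 < ε := by
      rw [hε]
      exact (Finset.lt_inf'_iff hne).mpr fun i _ => div_pos (hv'pos i) (hx'pos i)
    have hεle : ∀ i, ε * x' i ≤ v' i := by
      intro i
      have h1 : ε ≤ v' i / x' i := Finset.inf'_le _ (Finset.mem_univ i)
      calc ε * x' i ≤ (v' i / x' i) * x' i := mul_le_mul_of_nonneg_right h1 (hx'pos i).le
      _ = v' i := div_mul_cancel₀ _ (hx'pos i).ne'
    set c' : ℝ := 1 - (1 - c) * ε with hc'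
    have hc'lt : c' < 1 := by
      rw [hc']
      nlinarith [mul_pos (by linarith : (0:ℝ) < 1 - c) hεpos]
    have htest : ∀ i, (Ah *ᵥ x') i ≤ max c' 0 * x' i := by
      intro i
      have h1 := hstep i
      have h2 : (1 - c) * (ε * x' i) ≤ (1 - c) * v' i :=
        mul_le_mul_of_nonneg_left (hεle i) (by linarith)
      have h3 : c' * x' i ≤ max c' 0 * x' i :=
        mul_le_mul_of_nonneg_right (le_max_left _ _) (hx'pos i).le
      have h4 : (Ah *ᵥ x') i ≤ c' * x' i := by
        rw [hc']
        nlinarith [h1, h2]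
      linarith
    have := specRad_le_of_testvec hAh0 hx'pos (le_max_right c' 0) htest
    exact lt_of_le_of_lt this (max_lt hc'lt one_pos)
  · -- specRad Ah < 1 → specRad M₀ < 1
    intro hAh
    obtain ⟨x, hxpos, c, hc0, hc1, hxc⟩ := exists_testvec hAh0 hAh
    set y : Fin n → ℝ := L *ᵥ x with hy
    have hyapp : ∀ i, y i = l i * x i := by
      intro i
      rw [hy, hLdef]
      exact Matrix.mulVec_diagonal _ _ _
    have hypos : ∀ i, 0 < y i := fun i => by rw [hyapp i]; exact mul_pos (hl i) (hxpos i)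
    -- D *ᵥ x ≤ (fun i => c * x i - (A *ᵥ x) i)
    have hDx : ∀ i, (D *ᵥ x) i ≤ c * x i - (A *ᵥ x) i := by
      intro i
      have := hxc i
      rw [hAhdef, Matrix.add_mulVec] at this
      simp only [Pi.add_apply] at this
      linarith
    -- E *ᵥ (D *ᵥ x) ≤ c • x
    have hEDx : ∀ i, (E *ᵥ (D *ᵥ x)) i ≤ c * x i := by
      intro i
      have h1 : (E *ᵥ (D *ᵥ x)) i ≤ (E *ᵥ (fun j => c * x j + (-1) * (A *ᵥ x) j)) i := by
        refine mulVec_le_mulVec hE0 (fun j => ?_) i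
        have := hDx j
        linarith
      have h2 := mulVec_combo E c (-1) x (A *ᵥ x) i
      rw [h2] at h1
      have h3 : E *ᵥ (A *ᵥ x) = (E * A) *ᵥ x := mulVec_mulVec _ _ _
      have h4 : ((E * A) *ᵥ x) i = (E *ᵥ x) i - x i := by
        rw [hEA, Matrix.sub_mulVec, Matrix.one_mulVec]
        simp
      have h5 : (E *ᵥ (A *ᵥ x)) i = (E *ᵥ x) i - x i := by rw [h3, h4]
      rw [h5] at h1
      have h6 : x i ≤ (E *ᵥ x) i := hEx_ge x (fun j => (hxpos j).le) i
      nlinarith [h1, h6]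
    -- conclude: M₀ *ᵥ y ≤ c • y
    have htest : ∀ i, (M₀ *ᵥ y) i ≤ c * y i := by
      intro i
      have h1 : M₀ *ᵥ y = L *ᵥ (E *ᵥ (D *ᵥ x)) := by
        rw [hM₀def, hy, hDdef]
        simp only [mulVec_mulVec, Matrix.mul_assoc]
      rw [h1]
      have h2 : (L *ᵥ (E *ᵥ (D *ᵥ x))) i = l i * (E *ᵥ (D *ᵥ x)) i := by
        rw [hLdef]; exact Matrix.mulVec_diagonal _ _ _
      rw [h2, hyapp i]
      calc l i * (E *ᵥ (D *ᵥ x)) i ≤ l i * (c * x i) :=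
            mul_le_mul_of_nonneg_left (hEDx i) (hl i).le
      _ = c * (l i * x i) := by ring
    have := specRad_le_of_testvec hM₀0 hypos hc0 htest
    exact lt_of_le_of_lt this hc1
end

section
/- Let M₀ = (m_{ij}) be a strictly positive n×n matrix with spectral radius < 1. Then the normalized feasible region Θ = {c ∈ ℝⁿ₊ : c₁ = 1, cᵀ(I - M₀) ≥ 0ᵀ} is a nonempty compact convex set; moreover for every c ∈ Θ and every j ≥ 2, one has m_{1j}/(1 - m_{jj}) ≤ c_j ≤ (1 - m_{11})/m_{j1}. -/
open Matrix

open Filter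
open scoped NNReal ENNReal

section aux
attribute [local instance] Matrix.linftyOpNormedAddCommGroup Matrix.linftyOpNormedRing
  Matrix.linftyOpNormedAlgebra

variable {N : ℕ}

local instance : CompleteSpace (Matrix (Fin N) (Fin N) ℝ) :=
  by infer_instance

local instance : CompleteSpace (Matrix (Fin N) (Fin N) ℂ) :=
  by infer_instance

lemma norm_map_eq (A : Matrix (Fin N) (Fin N) ℝ) :
    ‖A.map (algebraMap ℝ ℂ)‖₊ = ‖A‖₊ := by
  simp [Matrix.linfty_opNNNorm_def, Matrix.map_apply]

lemma pow_entry_nonneg (M : Matrix (Fin N) (Fin N) ℝ) (hM : ∀ i j, 0 ≤ M i j) :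
    ∀ (k : ℕ) (i j), 0 ≤ (M ^ k) i j := by
  intro k
  induction k with
  | zero => intro i j; simp [Matrix.one_apply]; positivity
  | succ k ih =>
    intro i j
    rw [pow_succ, Matrix.mul_apply]
    exact Finset.sum_nonneg fun l _ => mul_nonneg (ih i l) (hM l j)

lemma exists_good_inverse {n : ℕ} (M : Matrix (Fin (n+2)) (Fin (n+2)) ℝ)
    (hM : ∀ i j, 0 ≤ M i j) (hspec : specRad M < 1) :
    ∃ S : Matrix (Fin (n+2)) (Fin (n+2)) ℝ,
      (∀ i j, 0 ≤ S i j) ∧ S * (1 - M) = 1 ∧ 1 ≤ S 0 0 := by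
  set M' := M.map (algebraMap ℝ ℂ) with hM'
  -- every spectral value has abs < 1
  have hbdd : BddAbove {r : ℝ | ∃ μ : ℂ, μ ∈ spectrum ℂ M' ∧ r = ‖μ‖} := by
    have h1 : {r : ℝ | ∃ μ : ℂ, μ ∈ spectrum ℂ M' ∧ r = ‖μ‖}
        = (fun μ => ‖μ‖) '' spectrum ℂ M' := by
      ext r; simp [eq_comm, and_comm]
    rw [h1]
    exact ((spectrum.isCompact M').image continuous_norm).bddAbove
  have habs : ∀ μ ∈ spectrum ℂ M', ‖μ‖₊ < 1 := by
    intro μ hμ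
    have : ‖μ‖ ≤ specRad M := le_csSup hbdd ⟨μ, hμ, rfl⟩
    have h2 : ‖μ‖ < 1 := lt_of_le_of_lt this hspec
    simpa [← NNReal.coe_lt_coe, Complex.norm_def] using h2
  have hρ : spectralRadius ℂ M' < (1 : ℝ≥0) :=
    spectrum.spectralRadius_lt_of_forall_lt M' habs
  -- Gelfand's formula
  have htend := spectrum.pow_nnnorm_pow_one_div_tendsto_nhds_spectralRadius M'
  have hρ1 : spectralRadius ℂ M' < (1 : ℝ≥0∞) := by simpa using hρ
  obtain ⟨r, hρr, hr1⟩ := ENNReal.lt_iff_exists_nnreal_btwn.mp hρ1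
  have hr1' : (r : ℝ) < 1 := by exact_mod_cast hr1
  have hev : ∀ᶠ k : ℕ in atTop, (‖M' ^ k‖₊ : ℝ≥0∞) ^ (1 / (k : ℝ)) < r :=
    htend.eventually_lt_const hρr
  have hev2 : ∀ᶠ k in atTop, ‖M ^ k‖ ≤ (r : ℝ) ^ k := by
    filter_upwards [hev, Filter.eventually_ge_atTop 1] with k hk hk1
    have hk0 : (k : ℝ) ≠ 0 := by positivity
    have h3 : ((‖M' ^ k‖₊ : ℝ≥0∞) ^ (1 / (k : ℝ))) ^ (k : ℝ) ≤ (r : ℝ≥0∞) ^ (k : ℝ) :=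
      ENNReal.rpow_le_rpow hk.le (by positivity)
    have h4 : (‖M' ^ k‖₊ : ℝ≥0∞) ≤ ((r ^ k : ℝ≥0) : ℝ≥0∞) := by
      calc (‖M' ^ k‖₊ : ℝ≥0∞)
          = ((‖M' ^ k‖₊ : ℝ≥0∞) ^ (1 / (k : ℝ))) ^ (k : ℝ) := by
            rw [← ENNReal.rpow_mul, one_div, inv_mul_cancel₀ hk0, ENNReal.rpow_one]
        _ ≤ (r : ℝ≥0∞) ^ (k : ℝ) := h3
        _ = ((r ^ k : ℝ≥0) : ℝ≥0∞) := by
            rw [ENNReal.rpow_natCast, ENNReal.coe_pow]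
    have hmk : M' ^ k = (M ^ k).map (algebraMap ℝ ℂ) := by
      rw [hM', ← RingHom.mapMatrix_apply, ← RingHom.mapMatrix_apply, map_pow]
    have h5 : ‖M ^ k‖₊ ≤ r ^ k := by
      have := ENNReal.coe_le_coe.mp h4
      rwa [hmk, _root_.norm_map_eq] at this
    calc ‖M ^ k‖ = ((‖M ^ k‖₊ : ℝ≥0) : ℝ) := rfl
      _ ≤ ((r ^ k : ℝ≥0) : ℝ) := by exact_mod_cast h5
      _ = (r : ℝ) ^ k := by push_cast; ring
  -- summability of the Neumann series
  have hsum : Summable (fun k : ℕ => M ^ k) :=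
    Summable.of_norm_bounded_eventually_nat
      (summable_geometric_of_lt_one r.coe_nonneg hr1') hev2
  set S := ∑' k : ℕ, M ^ k with hS
  have H : HasSum (fun k : ℕ => M ^ k) S := hsum.hasSum
  -- S * (1 - M) = 1
  have H1 : HasSum (fun k : ℕ => M ^ (k + 1)) (S - 1) := by
    have := (hasSum_nat_add_iff' (f := fun k : ℕ => M ^ k) 1).mpr H
    simpa using this
  have H2 : HasSum (fun k : ℕ => M ^ k * M) (S * M) := H.mul_right M
  have hSM : S * M = S - 1 := by
    have : (fun k : ℕ => M ^ k * M) = fun k : ℕ => M ^ (k + 1) := by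
      funext k; rw [pow_succ]
    rw [this] at H2
    exact H2.unique H1
  have hinv : S * (1 - M) = 1 := by
    rw [mul_sub, mul_one, hSM, sub_sub_cancel]
  -- entrywise sums
  have hentry : ∀ i j, HasSum (fun k : ℕ => (M ^ k) i j) (S i j) := by
    intro i j
    have hcont : Continuous fun A : Matrix (Fin (n+2)) (Fin (n+2)) ℝ => A i j := by
      exact (continuous_apply j).comp (continuous_apply i)
    exact H.map (AddMonoidHom.mk' (fun A : Matrix (Fin (n+2)) (Fin (n+2)) ℝ => A i j)
      (fun _ _ => rfl)) hcont
  refine ⟨S, fun i j => ?_, hinv, ?_⟩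
  · exact hasSum_le (fun k => pow_entry_nonneg M hM k i j) hasSum_zero (hentry i j)
  · have := le_hasSum (hentry 0 0) 0 (fun k _ => pow_entry_nonneg M hM k 0 0)
    simpa [Matrix.one_apply] using this
end aux

lemma vecMul_oneSub_apply {N : ℕ} (M : Matrix (Fin N) (Fin N) ℝ) (c : Fin N → ℝ) (j : Fin N) :
    (c ᵥ* (1 - M)) j = c j - ∑ i, c i * M i j := by
  simp only [Matrix.vecMul, dotProduct, Matrix.sub_apply, Matrix.one_apply, mul_sub,
    Finset.sum_sub_distrib, mul_ite, mul_one, mul_zero, Finset.sum_ite_eq, Finset.sum_ite_eq',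
    Finset.mem_univ, if_true]

lemma pair_sum_le {N : ℕ} [NeZero N] (M : Matrix (Fin N) (Fin N) ℝ) (hM : ∀ i j, 0 < M i j)
    (c : Fin N → ℝ) (hc : ∀ i, 0 ≤ c i) {j : Fin N} (hj : j ≠ (0 : Fin N)) (t : Fin N) :
    c 0 * M 0 t + c j * M j t ≤ ∑ i, c i * M i t := by
  have hsub : ({0, j} : Finset (Fin N)) ⊆ Finset.univ := Finset.subset_univ _
  have := Finset.sum_le_sum_of_subset_of_nonneg hsub
    (fun i _ _ => mul_nonneg (hc i) (hM i t).le)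
  rwa [Finset.sum_pair (Ne.symm hj)] at this

lemma key_bounds {N : ℕ} [NeZero N] (M : Matrix (Fin N) (Fin N) ℝ) (hM : ∀ i j, 0 < M i j)
    (c : Fin N → ℝ) (hc0 : ∀ i, 0 ≤ c i) (hc1 : c 0 = 1)
    (hc2 : ∀ j, 0 ≤ (c ᵥ* (1 - M)) j) {j : Fin N} (hj : j ≠ 0) :
    M 0 j / (1 - M j j) ≤ c j ∧ c j ≤ (1 - M 0 0) / M j 0 := by
  constructor
  · have h1 := hc2 j
    rw [vecMul_oneSub_apply] at h1
    have h2 := pair_sum_le M hM c hc0 hj j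
    rw [hc1, one_mul] at h2
    have h3 : M 0 j ≤ c j * (1 - M j j) := by nlinarith
    have hpos : 0 < 1 - M j j := by nlinarith [hM 0 j, hc0 j]
    exact (div_le_iff₀ hpos).mpr h3
  · have h1 := hc2 0
    rw [vecMul_oneSub_apply, hc1] at h1
    have h2 := pair_sum_le M hM c hc0 hj 0
    rw [hc1, one_mul] at h2
    have h3 : c j * M j 0 ≤ 1 - M 0 0 := by nlinarith
    exact (le_div_iff₀ (hM j 0)).mpr h3

theorem value_feasible_region_compact_convex {n : ℕ}
    (M : Matrix (Fin (n + 2)) (Fin (n + 2)) ℝ) (hM : ∀ i j, 0 < M i j)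
    (hspec : specRad M < 1) :
    (Set.Nonempty {c : Fin (n + 2) → ℝ | (∀ i, 0 ≤ c i) ∧ c 0 = 1 ∧
        ∀ j, 0 ≤ (c ᵥ* (1 - M)) j}) ∧
    IsCompact {c : Fin (n + 2) → ℝ | (∀ i, 0 ≤ c i) ∧ c 0 = 1 ∧
        ∀ j, 0 ≤ (c ᵥ* (1 - M)) j} ∧
    Convex ℝ {c : Fin (n + 2) → ℝ | (∀ i, 0 ≤ c i) ∧ c 0 = 1 ∧
        ∀ j, 0 ≤ (c ᵥ* (1 - M)) j} ∧
    ∀ c ∈ {c : Fin (n + 2) → ℝ | (∀ i, 0 ≤ c i) ∧ c 0 = 1 ∧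
        ∀ j, 0 ≤ (c ᵥ* (1 - M)) j},
      ∀ j : Fin (n + 2), j ≠ 0 →
        M 0 j / (1 - M j j) ≤ c j ∧ c j ≤ (1 - M 0 0) / M j 0 := by
  set s := {c : Fin (n + 2) → ℝ | (∀ i, 0 ≤ c i) ∧ c 0 = 1 ∧
      ∀ j, 0 ≤ (c ᵥ* (1 - M)) j} with hs
  refine ⟨?_, ?_, ?_, ?_⟩
  · -- Nonempty
    obtain ⟨S, hSnn, hSinv, hS00⟩ := exists_good_inverse M (fun i j => (hM i j).le) hspec
    have hS00pos : (0 : ℝ) < S 0 0 := lt_of_lt_of_le one_pos hS00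
    refine ⟨fun j => (S 0 0)⁻¹ * S 0 j, fun i => ?_, ?_, fun j => ?_⟩
    · exact mul_nonneg (inv_nonneg.mpr hS00pos.le) (hSnn 0 i)
    · exact inv_mul_cancel₀ hS00pos.ne'
    · have hrow : ((fun j => (S 0 0)⁻¹ * S 0 j) ᵥ* (1 - M)) j
          = (S 0 0)⁻¹ * ((S * (1 - M)) 0 j) := by
        simp only [Matrix.vecMul, dotProduct, Matrix.mul_apply, mul_assoc,
          ← Finset.mul_sum]
      rw [hrow, hSinv]
      have : (0 : ℝ) ≤ (1 : Matrix (Fin (n+2)) (Fin (n+2)) ℝ) 0 j := by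
        rw [Matrix.one_apply]; positivity
      positivity
  · -- Compact
    have hclosed : IsClosed s := by
      have h1 : IsClosed {c : Fin (n + 2) → ℝ | ∀ i, 0 ≤ c i} := by
        have : {c : Fin (n + 2) → ℝ | ∀ i, 0 ≤ c i} = ⋂ i, {c | 0 ≤ c i} := by
          ext c; simp
        rw [this]
        exact isClosed_iInter fun i => isClosed_Ici.preimage (continuous_apply i)
      have h2 : IsClosed {c : Fin (n + 2) → ℝ | c 0 = 1} :=
        isClosed_eq (continuous_apply 0) continuous_const
      have h3 : IsClosed {c : Fin (n + 2) → ℝ | ∀ j, 0 ≤ (c ᵥ* (1 - M)) j} := by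
        have : {c : Fin (n + 2) → ℝ | ∀ j, 0 ≤ (c ᵥ* (1 - M)) j}
            = ⋂ j, {c | 0 ≤ (c ᵥ* (1 - M)) j} := by ext c; simp
        rw [this]
        refine isClosed_iInter fun j => ?_
        have hcont : Continuous fun c : Fin (n + 2) → ℝ => (c ᵥ* (1 - M)) j := by
          simp only [Matrix.vecMul, dotProduct]
          exact continuous_finset_sum _ fun i _ => (continuous_apply i).mul continuous_const
        exact isClosed_Ici.preimage hcont
      have : s = {c : Fin (n + 2) → ℝ | ∀ i, 0 ≤ c i} ∩
          ({c | c 0 = 1} ∩ {c | ∀ j, 0 ≤ (c ᵥ* (1 - M)) j}) := by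
        ext c; simp only [hs, Set.mem_setOf_eq, Set.mem_inter_iff]
      rw [this]
      exact h1.inter (h2.inter h3)
    set B : Fin (n + 2) → ℝ := fun i => if i = 0 then 1 else (1 - M 0 0) / M i 0 with hB
    have hsub : s ⊆ Set.pi Set.univ fun i => Set.Icc 0 (B i) := by
      intro c hc
      obtain ⟨hc0, hc1, hc2⟩ := hc
      intro i _
      by_cases hi : i = 0
      · subst hi; simp [hB, hc1]
      · refine ⟨hc0 i, ?_⟩
        simp only [hB, if_neg hi]
        exact (key_bounds M hM c hc0 hc1 hc2 hi).2
    exact (isCompact_univ_pi fun i => isCompact_Icc).of_isClosed_subset hclosed hsub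
  · -- Convex
    intro x hx y hy a b ha hb hab
    obtain ⟨hx0, hx1, hx2⟩ := hx
    obtain ⟨hy0, hy1, hy2⟩ := hy
    refine ⟨fun i => ?_, ?_, fun j => ?_⟩
    · have : (a • x + b • y) i = a * x i + b * y i := rfl
      rw [this]
      have := mul_nonneg ha (hx0 i)
      have := mul_nonneg hb (hy0 i)
      linarith
    · have : (a • x + b • y) 0 = a * x 0 + b * y 0 := rfl
      rw [this, hx1, hy1]; linarith
    · have hexp : ((a • x + b • y) ᵥ* (1 - M)) j
          = a * ((x ᵥ* (1 - M)) j) + b * ((y ᵥ* (1 - M)) j) := by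
        simp only [Matrix.vecMul, dotProduct, Pi.add_apply, Pi.smul_apply,
          smul_eq_mul, add_mul, mul_assoc, Finset.sum_add_distrib, Finset.mul_sum]
      rw [hexp]
      have := mul_nonneg ha (hx2 j)
      have := mul_nonneg hb (hy2 j)
      linarith
  · -- bounds
    intro c hc j hj
    exact key_bounds M hM c hc.1 hc.2.1 hc.2.2 hj
end

section
/- With M(r) = L(I - à - rK)⁻¹ B under the standing assumptions (à irreducible nonnegative, K ≥ 0 nonzero, L positive diagonal, B ≥ 0 with no zero column), every entry of M(r) is strictly increasing in r on [0, r_A), and the spectral radius λ_max(M(r)) is strictly increasing in r. -/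
open Matrix Filter Finset

namespace SpecAux

open scoped Topology ENNReal NNReal

attribute [local instance] Matrix.linftyOpNormedRing Matrix.linftyOpNormedAlgebra

variable {n : ℕ}

/-- complexification -/
noncomputable abbrev mc (M : Matrix (Fin n) (Fin n) ℝ) : Matrix (Fin n) (Fin n) ℂ :=
  M.map (algebraMap ℝ ℂ)

lemma specRad_eq (M : Matrix (Fin n) (Fin n) ℝ) :
    specRad M = sSup ((fun μ : ℂ => ‖μ‖) '' spectrum ℂ (mc M)) := by
  unfold specRad
  congr 1
  ext r
  constructor
  · rintro ⟨μ, h1, rfl⟩; exact ⟨μ, h1, rfl⟩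
  · rintro ⟨μ, h1, rfl⟩; exact ⟨μ, h1, rfl⟩

lemma specSet_finite (M : Matrix (Fin n) (Fin n) ℝ) :
    ((fun μ : ℂ => ‖μ‖) '' spectrum ℂ (mc M)).Finite :=
  (Matrix.finite_spectrum _).image _

lemma abs_le_specRad {M : Matrix (Fin n) (Fin n) ℝ} {μ : ℂ}
    (hμ : μ ∈ spectrum ℂ (mc M)) : ‖μ‖ ≤ specRad M := by
  rw [specRad_eq]
  exact le_csSup (specSet_finite M).bddAbove ⟨μ, hμ, rfl⟩

lemma exists_abs_eq [Nonempty (Fin n)] (M : Matrix (Fin n) (Fin n) ℝ) :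
    ∃ μ ∈ spectrum ℂ (mc M), ‖μ‖ = specRad M := by
  have hne : (spectrum ℂ (mc M)).Nonempty := spectrum.nonempty (mc M)
  have hne' : ((fun μ : ℂ => ‖μ‖) '' spectrum ℂ (mc M)).Nonempty := hne.image _
  have hmem := Set.Nonempty.csSup_mem hne' (specSet_finite M)
  rw [specRad_eq]
  obtain ⟨μ, hμ, h⟩ := hmem
  exact ⟨μ, hμ, h⟩

lemma specRad_nonneg [Nonempty (Fin n)] (M : Matrix (Fin n) (Fin n) ℝ) :
    0 ≤ specRad M := by
  obtain ⟨μ, -, h⟩ := exists_abs_eq M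
  rw [← h]; exact norm_nonneg _


lemma mc_pow (M : Matrix (Fin n) (Fin n) ℝ) (k : ℕ) : (mc M) ^ k = mc (M ^ k) := by
  have := map_pow ((algebraMap ℝ ℂ).mapMatrix) M k
  simpa [mc, RingHom.mapMatrix_apply] using this.symm

lemma entry_abs_le_opNorm (N : Matrix (Fin n) (Fin n) ℂ) (i j : Fin n) :
    ‖N i j‖ ≤ ‖N‖ := by
  have h2 : ∑ j', ‖N i j'‖₊ ≤ ‖N‖₊ := by
    rw [Matrix.linfty_opNNNorm_def]
    exact Finset.le_sup (f := fun i => ∑ j', ‖N i j'‖₊) (Finset.mem_univ i)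
  have h3 : ‖N i j‖₊ ≤ ∑ j', ‖N i j'‖₊ :=
    Finset.single_le_sum (f := fun j' => ‖N i j'‖₊) (fun _ _ => zero_le) (Finset.mem_univ j)
  have h1 : ‖N i j‖₊ ≤ ‖N‖₊ := h3.trans h2
  calc ‖N i j‖ = ‖N i j‖ := rfl
  _ ≤ ‖N‖ := h1

/-- Powers decay geometrically below any `θ` above the spectral radius. -/
lemma tendsto_pow_div [Nonempty (Fin n)] (M : Matrix (Fin n) (Fin n) ℝ) {θ : ℝ}
    (hθ : 0 < θ) (h : specRad M < θ) (i j : Fin n) :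
    Tendsto (fun k => (M ^ k) i j / θ ^ k) atTop (𝓝 0) := by
  set ρ := specRad M with hρdef
  have hρ0 : 0 ≤ ρ := specRad_nonneg M
  set θ' : ℝ := (ρ + θ) / 2 with hθ'def
  have hθ'0 : 0 < θ' := by positivity
  have hρθ' : ρ < θ' := by simp only [hθ'def]; linarith
  have hθ'θ : θ' < θ := by simp only [hθ'def]; linarith
  set t : ℝ≥0 := θ'.toNNReal with htdef
  have htcoe : (t : ℝ) = θ' := Real.coe_toNNReal _ hθ'0.le
  -- spectral radius below t
  have hsr : spectralRadius ℂ (mc M) < (t : ℝ≥0∞) := by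
    apply spectrum.spectralRadius_lt_of_forall_lt
    intro z hz
    have h1 : ‖z‖ ≤ ρ := abs_le_specRad hz
    have h2 : (‖z‖₊ : ℝ) < (t : ℝ) := by
      rw [htcoe]
      calc (‖z‖₊ : ℝ) = ‖z‖ := rfl
      _ ≤ ρ := h1
      _ < θ' := hρθ'
    exact_mod_cast h2
  have hg := spectrum.pow_nnnorm_pow_one_div_tendsto_nhds_spectralRadius (mc M)
  have hev : ∀ᶠ k : ℕ in atTop,
      (‖(mc M) ^ k‖₊ : ℝ≥0∞) ^ (1 / (k : ℝ)) < (t : ℝ≥0∞) :=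
    hg.eventually_lt_const hsr
  have hev2 : ∀ᶠ k : ℕ in atTop, |(M ^ k) i j| ≤ θ' ^ k := by
    filter_upwards [hev, eventually_ge_atTop 1] with k hk hk1
    have hk0 : (k : ℝ) ≠ 0 := by positivity
    have h3 : (‖(mc M) ^ k‖₊ : ℝ≥0∞) < (t : ℝ≥0∞) ^ (k : ℝ) := by
      have := ENNReal.rpow_lt_rpow hk (by positivity : (0:ℝ) < (k:ℝ))
      rwa [← ENNReal.rpow_mul, one_div, inv_mul_cancel₀ hk0, ENNReal.rpow_one] at this
    have h4 : (‖(mc M) ^ k‖₊ : ℝ≥0∞) < ((t ^ k : ℝ≥0) : ℝ≥0∞) := by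
      rwa [ENNReal.coe_pow, ← ENNReal.rpow_natCast]
    have h5 : ‖(mc M) ^ k‖ < θ' ^ k := by
      have := (ENNReal.coe_lt_coe.mp h4 : ‖(mc M) ^ k‖₊ < t ^ k)
      calc ‖(mc M) ^ k‖ = ((‖(mc M) ^ k‖₊ : ℝ≥0) : ℝ) := rfl
      _ < ((t ^ k : ℝ≥0) : ℝ) := by exact_mod_cast this
      _ = θ' ^ k := by push_cast [htcoe]; ring
    have h6 : ‖((mc M) ^ k) i j‖ ≤ ‖(mc M) ^ k‖ :=
      entry_abs_le_opNorm _ i j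
    have h7 : ((mc M) ^ k) i j = ((M ^ k) i j : ℂ) := by
      rw [mc_pow]; rfl
    rw [h7, Complex.norm_real, Real.norm_eq_abs] at h6
    linarith
  have hlim : Tendsto (fun k : ℕ => (θ' / θ) ^ k) atTop (𝓝 0) :=
    tendsto_pow_atTop_nhds_zero_of_lt_one (by positivity) (by
      rw [div_lt_one hθ]; exact hθ'θ)
  apply squeeze_zero_norm' _ hlim
  filter_upwards [hev2] with k hk
  have hθk : (0:ℝ) < θ ^ k := by positivity
  calc ‖(M ^ k) i j / θ ^ k‖ = |(M ^ k) i j| / θ ^ k := by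
        rw [Real.norm_eq_abs, abs_div, abs_of_pos hθk]
  _ ≤ θ' ^ k / θ ^ k := by gcongr
  _ = (θ' / θ) ^ k := (div_pow _ _ _).symm


lemma entry_mul_nonneg {M N : Matrix (Fin n) (Fin n) ℝ}
    (hM : ∀ i j, 0 ≤ M i j) (hN : ∀ i j, 0 ≤ N i j) : ∀ i j, 0 ≤ (M * N) i j := by
  intro i j
  rw [Matrix.mul_apply]
  exact Finset.sum_nonneg fun q _ => mul_nonneg (hM i q) (hN q j)

lemma entry_pow_nonneg {M : Matrix (Fin n) (Fin n) ℝ}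
    (hM : ∀ i j, 0 ≤ M i j) (k : ℕ) : ∀ i j, 0 ≤ (M ^ k) i j := by
  induction k with
  | zero => intro i j; rw [pow_zero]; by_cases h : i = j <;> simp [Matrix.one_apply, h]
  | succ k ih => rw [pow_succ]; exact entry_mul_nonneg ih hM

lemma entry_mul_mono {A B C D : Matrix (Fin n) (Fin n) ℝ}
    (hA : ∀ i j, 0 ≤ A i j) (hC : ∀ i j, 0 ≤ C i j)
    (hAB : ∀ i j, A i j ≤ B i j) (hCD : ∀ i j, C i j ≤ D i j) :
    ∀ i j, (A * C) i j ≤ (B * D) i j := by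
  intro i j
  rw [Matrix.mul_apply, Matrix.mul_apply]
  exact Finset.sum_le_sum fun q _ =>
    mul_le_mul (hAB i q) (hCD q j) (hC q j) ((hA i q).trans (hAB i q))

lemma entry_pow_mono {A M : Matrix (Fin n) (Fin n) ℝ}
    (hA : ∀ i j, 0 ≤ A i j) (hAM : ∀ i j, A i j ≤ M i j) (k : ℕ) :
    ∀ i j, (A ^ k) i j ≤ (M ^ k) i j := by
  induction k with
  | zero => intro i j; rw [pow_zero, pow_zero]
  | succ k ih =>
      rw [pow_succ, pow_succ]
      exact entry_mul_mono (entry_pow_nonneg hA k) hA ih hAM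

lemma isUnit_one_sub_det [Nonempty (Fin n)] {M : Matrix (Fin n) (Fin n) ℝ}
    (h : specRad M < 1) : IsUnit (1 - M).det := by
  rw [isUnit_iff_ne_zero]
  intro hdet
  have hdetC : (mc (1 - M)).det = 0 := by
    have := RingHom.map_det (algebraMap ℝ ℂ) (1 - M)
    rw [RingHom.mapMatrix_apply] at this
    rw [← this, hdet, map_zero]
  have hmap : mc (1 - M) = 1 - mc M := by
    have := map_sub ((algebraMap ℝ ℂ).mapMatrix) 1 M
    simpa [mc, RingHom.mapMatrix_apply] using this
  have h1 : (1 : ℂ) ∈ spectrum ℂ (mc M) := by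
    rw [spectrum.mem_iff]
    intro hu
    rw [_root_.map_one] at hu
    have := (Matrix.isUnit_iff_isUnit_det _).mp hu
    rw [← hmap] at this
    rw [hdetC] at this
    exact not_isUnit_zero this
  have := abs_le_specRad h1
  rw [norm_one] at this
  linarith

lemma inv_entries [Nonempty (Fin n)] {M : Matrix (Fin n) (Fin n) ℝ}
    (hM0 : ∀ i j, 0 ≤ M i j) (h : specRad M < 1) :
    ∀ k, ∀ i j, (M ^ k) i j ≤ (1 - M)⁻¹ i j ∧ 0 ≤ (1 - M)⁻¹ i j := by
  have hdet := isUnit_one_sub_det h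
  set X := (1 - M)⁻¹ with hX
  set S : ℕ → Matrix (Fin n) (Fin n) ℝ := fun N => ∑ k ∈ Finset.range N, M ^ k with hS
  have hSX : ∀ N, S N = X - M ^ N * X := by
    intro N
    have h1 : S N * (1 - M) = 1 - M ^ N := by
      calc S N * (1 - M) = -(S N * (M - 1)) := by rw [← neg_sub M 1, mul_neg]
      _ = -(M ^ N - 1) := by rw [hS, geom_sum_mul]
      _ = 1 - M ^ N := neg_sub _ _
    calc S N = S N * ((1 - M) * X) := by
          rw [Matrix.mul_nonsing_inv _ hdet, mul_one]
    _ = (S N * (1 - M)) * X := by rw [mul_assoc]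
    _ = (1 - M ^ N) * X := by rw [h1]
    _ = X - M ^ N * X := by rw [sub_mul, one_mul]
  have hpow0 : ∀ i j, Tendsto (fun N => (M ^ N) i j) atTop (𝓝 0) := by
    intro i j
    have := tendsto_pow_div M one_pos h i j
    simpa using this
  have hStend : ∀ i j, Tendsto (fun N => S N i j) atTop (𝓝 (X i j)) := by
    intro i j
    have heq : ∀ N, S N i j = X i j - ∑ q, (M ^ N) i q * X q j := by
      intro N
      rw [hSX N, Matrix.sub_apply, Matrix.mul_apply]
    simp only [heq]
    have hsum : Tendsto (fun N => ∑ q, (M ^ N) i q * X q j) atTop (𝓝 0) := by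
      have : Tendsto (fun N => ∑ q, (M ^ N) i q * X q j) atTop
          (𝓝 (∑ q : Fin n, 0 * X q j)) :=
        tendsto_finset_sum _ fun q _ => (hpow0 i q).mul_const _
      simpa using this
    simpa using (tendsto_const_nhds.sub hsum)
  have hSentry : ∀ N i j, S N i j = ∑ k ∈ Finset.range N, (M ^ k) i j := by
    intro N i j
    rw [hS]
    simp [Matrix.sum_apply]
  have hmono : ∀ i j, Monotone fun N => S N i j := by
    intro i j
    apply monotone_nat_of_le_succ
    intro N
    rw [hSentry, hSentry, Finset.sum_range_succ]
    have := entry_pow_nonneg hM0 N i j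
    linarith
  have hle : ∀ N i j, S N i j ≤ X i j := fun N i j =>
    (hmono i j).ge_of_tendsto (hStend i j) N
  intro k i j
  constructor
  · refine le_trans ?_ (hle (k + 1) i j)
    rw [hSentry]
    exact Finset.single_le_sum (f := fun k => (M ^ k) i j)
      (fun q _ => entry_pow_nonneg hM0 q i j) (Finset.self_mem_range_succ k)
  · refine le_trans ?_ (hle 0 i j)
    rw [hSentry]
    simp


lemma le_specRad_of_subinv [Nonempty (Fin n)] {Q : Matrix (Fin n) (Fin n) ℝ}
    (hQ0 : ∀ i j, 0 ≤ Q i j) {w : Fin n → ℝ} (hw0 : ∀ i, 0 ≤ w i)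
    {i₀ : Fin n} (hwi : 0 < w i₀) {c : ℝ} (hc : 0 < c)
    (hsub : ∀ i, c * w i ≤ (Q *ᵥ w) i) : c ≤ specRad Q := by
  by_contra hlt
  push_neg at hlt
  have hpow : ∀ k i, c ^ k * w i ≤ ((Q ^ k) *ᵥ w) i := by
    intro k
    induction k with
    | zero => intro i; simp [Matrix.one_mulVec]
    | succ k ih =>
        intro i
        have h1 : (Q ^ (k + 1)) *ᵥ w = Q *ᵥ ((Q ^ k) *ᵥ w) := by
          rw [Matrix.mulVec_mulVec, ← pow_succ']
        rw [h1, Matrix.mulVec]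
        have h2 : ∀ j, Q i j * (c ^ k * w j) ≤ Q i j * ((Q ^ k) *ᵥ w) j :=
          fun j => mul_le_mul_of_nonneg_left (ih j) (hQ0 i j)
        calc c ^ (k + 1) * w i = c ^ k * (c * w i) := by ring
        _ ≤ c ^ k * (Q *ᵥ w) i := by
            apply mul_le_mul_of_nonneg_left (hsub i) (by positivity)
        _ = ∑ j, Q i j * (c ^ k * w j) := by
            rw [Matrix.mulVec, dotProduct, Finset.mul_sum]
            exact Finset.sum_congr rfl fun j _ => by ring
        _ ≤ ∑ j, Q i j * ((Q ^ k) *ᵥ w) j := Finset.sum_le_sum fun j _ => h2 j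
        _ = (fun j => Q i j) ⬝ᵥ ((Q ^ k) *ᵥ w) := rfl
  have htend : Tendsto (fun k => ∑ j, ((Q ^ k) i₀ j / c ^ k) * w j) atTop (𝓝 0) := by
    have : Tendsto (fun k => ∑ j, ((Q ^ k) i₀ j / c ^ k) * w j) atTop
        (𝓝 (∑ j : Fin n, 0 * w j)) :=
      tendsto_finset_sum _ fun j _ => (tendsto_pow_div Q hc hlt i₀ j).mul_const _
    simpa using this
  have hlb : ∀ k : ℕ, w i₀ ≤ ∑ j, ((Q ^ k) i₀ j / c ^ k) * w j := by
    intro k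
    have hck : (0:ℝ) < c ^ k := by positivity
    have := hpow k i₀
    rw [Matrix.mulVec, dotProduct] at this
    have heq : ∑ j, ((Q ^ k) i₀ j / c ^ k) * w j
        = (∑ j, (Q ^ k) i₀ j * w j) / c ^ k := by
      rw [Finset.sum_div]
      exact Finset.sum_congr rfl fun j _ => by ring
    rw [heq, le_div_iff₀ hck]
    calc w i₀ * c ^ k = c ^ k * w i₀ := by ring
    _ ≤ _ := this
  have := ge_of_tendsto' htend hlb
  linarith

lemma exists_subinv_vector [Nonempty (Fin n)] {P : Matrix (Fin n) (Fin n) ℝ}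
    (hP0 : ∀ i j, 0 ≤ P i j) :
    ∃ w : Fin n → ℝ, (∀ i, 0 ≤ w i) ∧ (∃ i, 0 < w i) ∧
      ∀ i, specRad P * w i ≤ (P *ᵥ w) i := by
  obtain ⟨μ, hμ, habs⟩ := exists_abs_eq P
  have hdet : (algebraMap ℂ (Matrix (Fin n) (Fin n) ℂ) μ - mc P).det = 0 := by
    have hns := spectrum.mem_iff.mp hμ
    by_contra hd
    exact hns ((Matrix.isUnit_iff_isUnit_det _).mpr (isUnit_iff_ne_zero.mpr hd))
  obtain ⟨v, hv0, hveq⟩ := (Matrix.exists_mulVec_eq_zero_iff).mpr hdet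
  have hPv : (mc P) *ᵥ v = μ • v := by
    have halg : algebraMap ℂ (Matrix (Fin n) (Fin n) ℂ) μ *ᵥ v = μ • v := by
      rw [Matrix.algebraMap_eq_diagonal]
      funext i
      rw [Matrix.mulVec_diagonal]
      simp
    rw [Matrix.sub_mulVec, halg, sub_eq_zero] at hveq
    exact hveq.symm
  refine ⟨fun i => ‖v i‖, fun i => norm_nonneg _, ?_, ?_⟩
  · obtain ⟨i, hi⟩ := Function.ne_iff.mp hv0
    exact ⟨i, norm_pos_iff.mpr hi⟩
  · intro i
    have h1 : specRad P * ‖v i‖ = ‖μ * v i‖ := by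
      rw [norm_mul, habs]
    have h2 : μ * v i = ((mc P) *ᵥ v) i := by rw [hPv]; rfl
    rw [h1, h2, Matrix.mulVec, dotProduct]
    calc ‖∑ j, (mc P) i j * v j‖
        ≤ ∑ j, ‖(mc P) i j * v j‖ := norm_sum_le _ _
    _ = ∑ j, P i j * ‖v j‖ := by
        refine Finset.sum_congr rfl fun j _ => ?_
        rw [norm_mul]
        congr 1
        show ‖((P i j : ℂ))‖ = P i j
        rw [Complex.norm_real, Real.norm_eq_abs, abs_of_nonneg (hP0 i j)]
    _ = (P *ᵥ fun j => ‖v j‖) i := rfl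

lemma specRad_strict_mono [Nonempty (Fin n)] {P Q : Matrix (Fin n) (Fin n) ℝ}
    (hP : ∀ i j, 0 < P i j) (hPQ : ∀ i j, P i j < Q i j) :
    specRad P < specRad Q := by
  obtain ⟨w, hw0, ⟨i₀, hwi⟩, hsub⟩ := exists_subinv_vector (fun i j => (hP i j).le)
  obtain ⟨i₁, -, hi₁⟩ := Finset.exists_max_image Finset.univ w ⟨i₀, Finset.mem_univ i₀⟩
  obtain ⟨i₂, -, hi₂⟩ := Finset.exists_min_image Finset.univ
    (fun i => ((Q - P) *ᵥ w) i) ⟨i₀, Finset.mem_univ i₀⟩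
  have hQP0 : ∀ i j, 0 < (Q - P) i j := fun i j => by
    have := hPQ i j; rw [Matrix.sub_apply]; linarith
  set W := w i₁ with hW
  have hWpos : 0 < W := lt_of_lt_of_le hwi (hi₁ i₀ (Finset.mem_univ i₀))
  set δ := ((Q - P) *ᵥ w) i₂ with hδdef
  have hδ : 0 < δ := by
    rw [hδdef, Matrix.mulVec, dotProduct]
    have hterm : ∀ j ∈ Finset.univ, 0 ≤ (Q - P) i₂ j * w j :=
      fun j _ => mul_nonneg (hQP0 i₂ j).le (hw0 j)
    have hpos : 0 < (Q - P) i₂ i₀ * w i₀ := mul_pos (hQP0 i₂ i₀) hwi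
    calc (0:ℝ) < (Q - P) i₂ i₀ * w i₀ := hpos
    _ ≤ _ := Finset.single_le_sum hterm (Finset.mem_univ i₀)
  have hρ0 : 0 ≤ specRad P := specRad_nonneg P
  set c := specRad P + δ / W with hcdef
  have hcρ : specRad P < c := by
    rw [hcdef]
    have : 0 < δ / W := by positivity
    linarith
  have hc0 : 0 < c := lt_of_le_of_lt hρ0 hcρ
  refine lt_of_lt_of_le hcρ (le_specRad_of_subinv (fun i j => (lt_trans (hP i j) (hPQ i j)).le)
    hw0 hwi hc0 ?_)
  intro i
  have h1 : (δ / W) * w i ≤ δ := by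
    have hwle : w i ≤ W := hi₁ i (Finset.mem_univ i)
    calc (δ / W) * w i ≤ (δ / W) * W := by
          apply mul_le_mul_of_nonneg_left hwle (by positivity)
    _ = δ := div_mul_cancel₀ _ hWpos.ne'
  have h2 : δ ≤ ((Q - P) *ᵥ w) i := hi₂ i (Finset.mem_univ i)
  have h3 : (P *ᵥ w) i + ((Q - P) *ᵥ w) i = (Q *ᵥ w) i := by
    rw [Matrix.sub_mulVec]
    simp
  have h4 := hsub i
  calc c * w i = specRad P * w i + (δ / W) * w i := by rw [hcdef]; ring
  _ ≤ (P *ᵥ w) i + ((Q - P) *ᵥ w) i := by linarith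
  _ = (Q *ᵥ w) i := h3

end SpecAux


theorem M_r_strictly_increasing {n : ℕ}
    (A K B : Matrix (Fin n) (Fin n) ℝ) (l : Fin n → ℝ)
    (hA0 : ∀ i j, 0 ≤ A i j) (hAirr : MatIrred A)
    (hK0 : ∀ i j, 0 ≤ K i j) (hKne : K ≠ 0)
    (hl : ∀ j, 0 < l j)
    (hB0 : ∀ i j, 0 ≤ B i j) (hBcol : ∀ j, ∃ i, 0 < B i j)
    (rA : ℝ) (hspec : ∀ r, 0 ≤ r → r < rA → specRad (A + r • K) < 1)
    (r₁ r₂ : ℝ) (h1 : 0 ≤ r₁) (h12 : r₁ < r₂) (h2 : r₂ < rA) :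
    (∀ i j, (Matrix.diagonal l * (1 - (A + r₁ • K))⁻¹ * B) i j <
            (Matrix.diagonal l * (1 - (A + r₂ • K))⁻¹ * B) i j) ∧
    specRad (Matrix.diagonal l * (1 - (A + r₁ • K))⁻¹ * B) <
      specRad (Matrix.diagonal l * (1 - (A + r₂ • K))⁻¹ * B) := by
  rcases Nat.eq_zero_or_pos n with hn | hn
  · exfalso; subst hn; exact hKne (Subsingleton.elim K 0)
  haveI : Nonempty (Fin n) := ⟨⟨0, hn⟩⟩
  have h1' : 0 ≤ r₂ := le_trans h1 h12.le
  set M₁ := A + r₁ • K with hM₁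
  set M₂ := A + r₂ • K with hM₂
  have hsmul : ∀ (r : ℝ) (p q : Fin n), (r • K) p q = r * K p q := fun _ _ _ => rfl
  have hM₁0 : ∀ i j, 0 ≤ M₁ i j := fun i j => by
    rw [hM₁, Matrix.add_apply, hsmul]
    exact add_nonneg (hA0 i j) (mul_nonneg h1 (hK0 i j))
  have hM₂0 : ∀ i j, 0 ≤ M₂ i j := fun i j => by
    rw [hM₂, Matrix.add_apply, hsmul]
    exact add_nonneg (hA0 i j) (mul_nonneg h1' (hK0 i j))
  have hAM₁ : ∀ i j, A i j ≤ M₁ i j := fun i j => by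
    rw [hM₁, Matrix.add_apply, hsmul]
    have := mul_nonneg h1 (hK0 i j); linarith
  have hAM₂ : ∀ i j, A i j ≤ M₂ i j := fun i j => by
    rw [hM₂, Matrix.add_apply, hsmul]
    have := mul_nonneg h1' (hK0 i j); linarith
  have hs₁ : specRad M₁ < 1 := hspec r₁ h1 (lt_trans h12 h2)
  have hs₂ : specRad M₂ < 1 := hspec r₂ h1' h2
  set X₁ := (1 - M₁)⁻¹ with hX₁def
  set X₂ := (1 - M₂)⁻¹ with hX₂def
  have hX₁ := SpecAux.inv_entries hM₁0 hs₁
  have hX₂ := SpecAux.inv_entries hM₂0 hs₂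
  have hX₁0 : ∀ i j, 0 ≤ X₁ i j := fun i j => (hX₁ 0 i j).2
  have hX₂0 : ∀ i j, 0 ≤ X₂ i j := fun i j => (hX₂ 0 i j).2
  have hX₁pos : ∀ i j, 0 < X₁ i j := by
    intro i j
    obtain ⟨k, -, hAk⟩ := hAirr i j
    exact lt_of_lt_of_le (lt_of_lt_of_le hAk (SpecAux.entry_pow_mono hA0 hAM₁ k i j))
      ((hX₁ k i j).1)
  have hX₂pos : ∀ i j, 0 < X₂ i j := by
    intro i j
    obtain ⟨k, -, hAk⟩ := hAirr i j
    exact lt_of_lt_of_le (lt_of_lt_of_le hAk (SpecAux.entry_pow_mono hA0 hAM₂ k i j))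
      ((hX₂ k i j).1)
  have hdet₁ := SpecAux.isUnit_one_sub_det hs₁
  have hdet₂ := SpecAux.isUnit_one_sub_det hs₂
  have hdiff : X₂ - X₁ = X₂ * ((r₂ - r₁) • K) * X₁ := by
    have e1 : (1 - M₁) - (1 - M₂) = (r₂ - r₁) • K := by
      rw [hM₁, hM₂]
      ext i j
      simp only [Matrix.sub_apply, Matrix.add_apply, Matrix.one_apply, hsmul]
      ring
    calc X₂ - X₁ = X₂ * ((1 - M₁) * X₁) - (X₂ * (1 - M₂)) * X₁ := by
          rw [Matrix.mul_nonsing_inv _ hdet₁, Matrix.nonsing_inv_mul _ hdet₂,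
            mul_one, one_mul]
    _ = X₂ * ((1 - M₁) - (1 - M₂)) * X₁ := by
          noncomm_ring
    _ = X₂ * ((r₂ - r₁) • K) * X₁ := by rw [e1]
  obtain ⟨a, b, hKab⟩ : ∃ a b, 0 < K a b := by
    by_contra h
    push_neg at h
    exact hKne (by ext a b; exact le_antisymm (h a b) (hK0 a b))
  have hr21 : 0 < r₂ - r₁ := by linarith
  have hsKnn : ∀ p q, 0 ≤ ((r₂ - r₁) • K) p q := fun p q => by
    rw [hsmul]; exact mul_nonneg hr21.le (hK0 p q)
  have hXdiffpos : ∀ i q, 0 < (X₂ - X₁) i q := by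
    intro i q
    rw [hdiff]
    have hmid0 : ∀ s, 0 ≤ (X₂ * ((r₂ - r₁) • K)) i s :=
      fun s => SpecAux.entry_mul_nonneg hX₂0 hsKnn i s
    have hmidb : 0 < (X₂ * ((r₂ - r₁) • K)) i b := by
      rw [Matrix.mul_apply]
      have hterm : ∀ p ∈ Finset.univ, 0 ≤ X₂ i p * ((r₂ - r₁) • K) p b :=
        fun p _ => mul_nonneg (hX₂0 i p) (hsKnn p b)
      have hpos : 0 < X₂ i a * ((r₂ - r₁) • K) a b := by
        rw [hsmul]; exact mul_pos (hX₂pos i a) (mul_pos hr21 hKab)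
      exact lt_of_lt_of_le hpos (Finset.single_le_sum hterm (Finset.mem_univ a))
    rw [Matrix.mul_apply]
    have hterm : ∀ s ∈ Finset.univ, 0 ≤ (X₂ * ((r₂ - r₁) • K)) i s * X₁ s q :=
      fun s _ => mul_nonneg (hmid0 s) (hX₁0 s q)
    have hpos : 0 < (X₂ * ((r₂ - r₁) • K)) i b * X₁ b q :=
      mul_pos hmidb (hX₁pos b q)
    exact lt_of_lt_of_le hpos (Finset.single_le_sum hterm (Finset.mem_univ b))
  have hstrict : ∀ i q, X₁ i q < X₂ i q := fun i q => by
    have := hXdiffpos i q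
    rw [Matrix.sub_apply] at this
    linarith
  have hdM : ∀ (X : Matrix (Fin n) (Fin n) ℝ) i j,
      (Matrix.diagonal l * X * B) i j = l i * ∑ q, X i q * B q j := by
    intro X i j
    rw [Matrix.mul_apply, Finset.mul_sum]
    refine Finset.sum_congr rfl fun q _ => ?_
    rw [Matrix.diagonal_mul]
    ring
  have hentry : ∀ i j, (Matrix.diagonal l * X₁ * B) i j <
      (Matrix.diagonal l * X₂ * B) i j := by
    intro i j
    rw [hdM X₁, hdM X₂]
    obtain ⟨q₀, hq₀⟩ := hBcol j
    refine mul_lt_mul_of_pos_left ?_ (hl i)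
    refine Finset.sum_lt_sum
      (fun q _ => mul_le_mul_of_nonneg_right (hstrict i q).le (hB0 q j))
      ⟨q₀, Finset.mem_univ q₀, mul_lt_mul_of_pos_right (hstrict i q₀) hq₀⟩
  refine ⟨hentry, ?_⟩
  refine SpecAux.specRad_strict_mono ?_ hentry
  intro i j
  rw [hdM X₁]
  obtain ⟨q₀, hq₀⟩ := hBcol j
  have hsum : 0 < ∑ q, X₁ i q * B q j := by
    have hterm : ∀ q ∈ Finset.univ, 0 ≤ X₁ i q * B q j :=
      fun q _ => mul_nonneg (hX₁0 i q) (hB0 q j)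
    have hpos : 0 < X₁ i q₀ * B q₀ j := mul_pos (hX₁pos i q₀) hq₀
    exact lt_of_lt_of_le hpos (Finset.single_le_sum hterm (Finset.mem_univ q₀))
  exact mul_pos (hl i) hsum
end

section
/- Let M be a strictly positive n×n matrix with λ_max(M) = 1. Then the set {w ∈ ℝⁿ₊ : w₁ = 1, wᵀ(I - M) ≥ 0ᵀ} consists of exactly one point, namely the left Perron eigenvector of M normalized by its first coordinate. -/
open Matrix

variable {n : ℕ}

private lemma mulVec_pos' {A : Matrix (Fin (n+1)) (Fin (n+1)) ℝ} (hA : ∀ i j, 0 < A i j)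
    {u : Fin (n+1) → ℝ} (hu : ∀ i, 0 ≤ u i) {k : Fin (n+1)} (hk : 0 < u k) (i : Fin (n+1)) :
    0 < (A *ᵥ u) i := by
  have h : (A *ᵥ u) i = ∑ j, A i j * u j := rfl
  rw [h]
  exact Finset.sum_pos' (fun j _ => mul_nonneg (hA i j).le (hu j))
    ⟨k, Finset.mem_univ k, mul_pos (hA i k) hk⟩

private lemma vecMul_pos' {A : Matrix (Fin (n+1)) (Fin (n+1)) ℝ} (hA : ∀ i j, 0 < A i j)
    {u : Fin (n+1) → ℝ} (hu : ∀ i, 0 ≤ u i) {k : Fin (n+1)} (hk : 0 < u k) (j : Fin (n+1)) :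
    0 < (u ᵥ* A) j := by
  have h : (u ᵥ* A) j = ∑ i, u i * A i j := rfl
  rw [h]
  exact Finset.sum_pos' (fun i _ => mul_nonneg (hu i) (hA i j).le)
    ⟨k, Finset.mem_univ k, mul_pos hk (hA k j)⟩

private lemma mem_spectrum_ofReal (A : Matrix (Fin (n+1)) (Fin (n+1)) ℝ) {t : ℝ}
    {v : Fin (n+1) → ℝ} (hv : v ≠ 0) (heq : A *ᵥ v = t • v) :
    (t : ℂ) ∈ spectrum ℂ (A.map (algebraMap ℝ ℂ)) := by
  rw [spectrum.mem_iff, Matrix.isUnit_iff_isUnit_det, isUnit_iff_ne_zero, not_not,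
    ← Matrix.exists_mulVec_eq_zero_iff]
  refine ⟨fun i => (v i : ℂ), ?_, ?_⟩
  · intro h0
    apply hv; funext i
    have := congrFun h0 i
    simpa using this
  · funext i
    have h2 : ∑ j, A i j * v j = t * v i := congrFun heq i
    have h1 : ∑ j, (A i j : ℂ) * (v j : ℂ) = (t : ℂ) * (v i : ℂ) := by
      exact_mod_cast h2
    rw [Algebra.algebraMap_eq_smul_one]
    show ∑ x, ((t:ℂ) • (1:Matrix (Fin (n+1)) (Fin (n+1)) ℂ) - A.map (algebraMap ℝ ℂ)) i x * (v x : ℂ) = 0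
    simp only [Matrix.sub_apply, Matrix.smul_apply, Matrix.map_apply, smul_eq_mul, sub_mul,
      Finset.sum_sub_distrib, h1, Matrix.one_apply, mul_ite, ite_mul, mul_one, mul_zero, zero_mul,
      Finset.sum_ite_eq, Finset.mem_univ, if_true, sub_self]
    rw [sub_eq_zero, ← h1]
    rfl

private lemma exists_eigvec_of_mem_spectrum (A : Matrix (Fin (n+1)) (Fin (n+1)) ℝ) {μ : ℂ}
    (hμ : μ ∈ spectrum ℂ (A.map (algebraMap ℝ ℂ))) :
    ∃ v : Fin (n+1) → ℂ, v ≠ 0 ∧ ∀ i, ∑ j, (A i j : ℂ) * v j = μ * v i := by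
  rw [spectrum.mem_iff, Matrix.isUnit_iff_isUnit_det, isUnit_iff_ne_zero, not_not,
    ← Matrix.exists_mulVec_eq_zero_iff] at hμ
  obtain ⟨v, hv, heq⟩ := hμ
  refine ⟨v, hv, fun i => ?_⟩
  have h := congrFun heq i
  rw [Algebra.algebraMap_eq_smul_one] at h
  have h2 : ∑ x, (μ • (1:Matrix (Fin (n+1)) (Fin (n+1)) ℂ) - A.map (algebraMap ℝ ℂ)) i x * v x = 0 := h
  simp only [Matrix.sub_apply, Matrix.smul_apply, Matrix.map_apply, smul_eq_mul, sub_mul,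
    Finset.sum_sub_distrib, Matrix.one_apply, mul_ite, ite_mul, mul_one, mul_zero, zero_mul,
    Finset.sum_ite_eq, Finset.mem_univ, if_true] at h2
  rw [sub_eq_zero] at h2
  rw [h2]
  rfl

private lemma spectrum_transpose (A : Matrix (Fin (n+1)) (Fin (n+1)) ℝ) :
    spectrum ℂ ((Aᵀ).map (algebraMap ℝ ℂ)) = spectrum ℂ (A.map (algebraMap ℝ ℂ)) := by
  have hmap : (Aᵀ).map (algebraMap ℝ ℂ) = (A.map (algebraMap ℝ ℂ))ᵀ := rfl
  rw [hmap]
  ext μ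
  rw [spectrum.mem_iff, spectrum.mem_iff, Matrix.isUnit_iff_isUnit_det,
    Matrix.isUnit_iff_isUnit_det]
  have : (algebraMap ℂ _ μ - (A.map (algebraMap ℝ ℂ))ᵀ).det
      = (algebraMap ℂ _ μ - A.map (algebraMap ℝ ℂ)).det := by
    rw [← Matrix.det_transpose (algebraMap ℂ _ μ - A.map (algebraMap ℝ ℂ)), Matrix.transpose_sub]
    congr 1
    rw [Algebra.algebraMap_eq_smul_one, Matrix.transpose_smul, Matrix.transpose_one]
  rw [this]

private lemma specRad_transpose (A : Matrix (Fin (n+1)) (Fin (n+1)) ℝ) :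
    specRad Aᵀ = specRad A := by
  unfold specRad
  rw [spectrum_transpose]

private lemma perron_exists (A : Matrix (Fin (n+1)) (Fin (n+1)) ℝ) (hA : ∀ i j, 0 < A i j) :
    ∃ z : Fin (n+1) → ℝ, (∀ i, 0 < z i) ∧ 0 < specRad A ∧ A *ᵥ z = specRad A • z := by
  classical
  set S : Set (Fin (n+1) → ℝ) := stdSimplex ℝ (Fin (n+1)) with hSdef
  have hScomp : IsCompact S := isCompact_stdSimplex ℝ (Fin (n+1))
  set B : ℝ := ∑ i, ∑ j, A i j with hBdef
  -- any feasible t is at most B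
  have hbound : ∀ t : ℝ, ∀ x ∈ S, (∀ j, t * x j ≤ (A *ᵥ x) j) → t ≤ B := by
    intro t x hx hineq
    have hx1 : ∑ j, x j = 1 := hx.2
    have hxle : ∀ k, x k ≤ 1 := fun k => by
      calc x k ≤ ∑ j, x j := Finset.single_le_sum (fun j _ => hx.1 j) (Finset.mem_univ k)
        _ = 1 := hx1
    calc t = ∑ j, t * x j := by rw [← Finset.mul_sum, hx1, mul_one]
      _ ≤ ∑ j, (A *ᵥ x) j := Finset.sum_le_sum (fun j _ => hineq j)
      _ = ∑ j, ∑ k, A j k * x k := rfl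
      _ ≤ ∑ j, ∑ k, A j k := by
          refine Finset.sum_le_sum fun j _ => Finset.sum_le_sum fun k _ => ?_
          calc A j k * x k ≤ A j k * 1 := by
                exact mul_le_mul_of_nonneg_left (hxle k) (hA j k).le
            _ = A j k := mul_one _
  set T : Set (ℝ × (Fin (n+1) → ℝ)) :=
    {p | p.2 ∈ S ∧ 0 ≤ p.1 ∧ ∀ j, p.1 * p.2 j ≤ (A *ᵥ p.2) j} with hTdef
  have hTsub : T ⊆ Set.Icc (0:ℝ) B ×ˢ S := by
    rintro ⟨t, x⟩ ⟨hx, ht0, hineq⟩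
    exact ⟨⟨ht0, hbound t x hx hineq⟩, hx⟩
  have hTclosed : IsClosed T := by
    have h1 : IsClosed {p : ℝ × (Fin (n+1) → ℝ) | p.2 ∈ S} :=
      hScomp.isClosed.preimage continuous_snd
    have h2 : IsClosed {p : ℝ × (Fin (n+1) → ℝ) | 0 ≤ p.1} :=
      isClosed_le continuous_const continuous_fst
    have h3 : ∀ j, IsClosed {p : ℝ × (Fin (n+1) → ℝ) | p.1 * p.2 j ≤ (A *ᵥ p.2) j} := by
      intro j
      apply isClosed_le
      · exact continuous_fst.mul ((continuous_apply j).comp continuous_snd)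
      · exact (continuous_apply j).comp (continuous_const.matrix_mulVec continuous_snd)
    have hTeq : T = {p : ℝ × (Fin (n+1) → ℝ) | p.2 ∈ S} ∩ ({p | 0 ≤ p.1} ∩
        ⋂ j, {p : ℝ × (Fin (n+1) → ℝ) | p.1 * p.2 j ≤ (A *ᵥ p.2) j}) := by
      ext p
      simp only [hTdef, Set.mem_setOf_eq, Set.mem_inter_iff, Set.mem_iInter]
    rw [hTeq]
    exact h1.inter (h2.inter (isClosed_iInter h3))
  have hTcomp : IsCompact T :=
    ((isCompact_Icc).prod hScomp).of_isClosed_subset hTclosed hTsub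
  -- uniform vector
  set u : Fin (n+1) → ℝ := fun _ => (n+1:ℝ)⁻¹ with hudef
  have hupos : ∀ i, 0 < u i := fun i => by positivity
  have huS : u ∈ S := by
    constructor
    · exact fun i => (hupos i).le
    · simp [hudef, Finset.sum_const, Finset.card_univ]
      rw [mul_inv_cancel₀]
      positivity
  have hTne : T.Nonempty := by
    refine ⟨(0, u), huS, le_refl 0, fun j => ?_⟩
    rw [zero_mul]
    exact (mulVec_pos' hA (fun i => (hupos i).le) (k := 0) (hupos 0) j).le
  obtain ⟨⟨ρ, x₀⟩, hmemT, hmax⟩ := hTcomp.exists_isMaxOn hTne continuous_fst.continuousOn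
  obtain ⟨hx₀S, hρ0, hgeq⟩ := hmemT
  have hmax' : ∀ t x, (t, x) ∈ T → t ≤ ρ := fun t x h => hmax h
  -- ρ is positive
  have hρpos : 0 < ρ := by
    set t₀ : ℝ := (Finset.univ.inf' Finset.univ_nonempty (fun j => (A *ᵥ u) j)) * (n+1) with ht₀
    have hinfpos : 0 < Finset.univ.inf' Finset.univ_nonempty (fun j => (A *ᵥ u) j) := by
      rw [Finset.lt_inf'_iff]
      exact fun j _ => mulVec_pos' hA (fun i => (hupos i).le) (k := 0) (hupos 0) j
    have ht₀pos : 0 < t₀ := by positivity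
    refine lt_of_lt_of_le ht₀pos (hmax' t₀ u ⟨huS, ht₀pos.le, fun j => ?_⟩)
    rw [ht₀, hudef]
    have h1 : (Finset.univ.inf' Finset.univ_nonempty (fun j => (A *ᵥ u) j)) ≤ (A *ᵥ u) j :=
      Finset.inf'_le _ (Finset.mem_univ j)
    have h2 : ((n:ℝ)+1) * ((n:ℝ)+1)⁻¹ = 1 := by
      rw [mul_inv_cancel₀]; positivity
    calc Finset.univ.inf' Finset.univ_nonempty (fun j => (A *ᵥ u) j) * ((n:ℝ)+1) * ((n:ℝ)+1)⁻¹
        = Finset.univ.inf' Finset.univ_nonempty (fun j => (A *ᵥ u) j) := by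
          rw [mul_assoc, h2, mul_one]
      _ ≤ (A *ᵥ u) j := h1
  -- x₀ has a positive entry
  have hx₀nz : ∃ k, 0 < x₀ k := by
    by_contra h
    push_neg at h
    have : ∑ j, x₀ j = 0 := le_antisymm (Finset.sum_nonpos (fun j _ => h j))
      (Finset.sum_nonneg (fun j _ => hx₀S.1 j))
    rw [hx₀S.2] at this
    norm_num at this
  obtain ⟨k₀, hk₀⟩ := hx₀nz
  have hAx₀pos : ∀ i, 0 < (A *ᵥ x₀) i := mulVec_pos' hA hx₀S.1 hk₀
  -- the eigen-equation
  have heig : A *ᵥ x₀ = ρ • x₀ := by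
    by_contra hne
    set u₁ : Fin (n+1) → ℝ := A *ᵥ x₀ - ρ • x₀ with hu₁
    have hu₁nonneg : ∀ i, 0 ≤ u₁ i := fun i => by
      simp only [hu₁, Pi.sub_apply, Pi.smul_apply, smul_eq_mul, sub_nonneg]
      exact hgeq i
    have hu₁ne : ∃ k, 0 < u₁ k := by
      by_contra h
      push_neg at h
      apply hne
      rw [← sub_eq_zero]
      funext i
      exact le_antisymm (h i) (hu₁nonneg i)
    obtain ⟨k₁, hk₁⟩ := hu₁ne
    set z : Fin (n+1) → ℝ := A *ᵥ x₀ with hz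
    have hzpos : ∀ i, 0 < z i := hAx₀pos
    have hAu₁pos : ∀ i, 0 < (A *ᵥ u₁) i := mulVec_pos' hA hu₁nonneg hk₁
    have hstrict : ∀ i, ρ * z i < (A *ᵥ z) i := by
      intro i
      have h1 : (A *ᵥ z) i - ρ * z i = (A *ᵥ u₁) i := by
        rw [hu₁, Matrix.mulVec_sub, Matrix.mulVec_smul]
        simp [hz]
      linarith [hAu₁pos i, h1]
    set s : ℝ := ∑ i, z i with hs
    have hspos : 0 < s := Finset.sum_pos (fun i _ => hzpos i) Finset.univ_nonempty
    set x₁ : Fin (n+1) → ℝ := s⁻¹ • z with hx₁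
    have hx₁S : x₁ ∈ S := by
      constructor
      · intro i
        exact mul_nonneg (inv_nonneg.2 hspos.le) (hzpos i).le
      · simp only [hx₁, Pi.smul_apply, smul_eq_mul]
        rw [← Finset.mul_sum, ← hs, inv_mul_cancel₀ hspos.ne']
    set ε : ℝ := (Finset.univ.inf' Finset.univ_nonempty (fun j => (A *ᵥ z) j - ρ * z j)) with hε
    have hεpos : 0 < ε := by
      rw [hε, Finset.lt_inf'_iff]
      intro j _
      linarith [hstrict j]
    set δ : ℝ := ε / s with hδ
    have hδpos : 0 < δ := div_pos hεpos hspos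
    have hmem1 : (ρ + δ, x₁) ∈ T := by
      refine ⟨hx₁S, (add_pos_of_nonneg_of_pos hρ0 hδpos).le, fun j => ?_⟩
      have hzj_le : z j ≤ s := Finset.single_le_sum (fun i _ => (hzpos i).le) (Finset.mem_univ j)
      have hεle : ε ≤ (A *ᵥ z) j - ρ * z j := Finset.inf'_le _ (Finset.mem_univ j)
      have key : (ρ + δ) * z j ≤ (A *ᵥ z) j := by
        have h1 : δ * z j ≤ ε := by
          rw [hδ, div_mul_eq_mul_div, div_le_iff₀ hspos]
          exact mul_le_mul_of_nonneg_left hzj_le hεpos.le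
        nlinarith
      have h2 : (A *ᵥ x₁) j = s⁻¹ * (A *ᵥ z) j := by
        rw [hx₁, Matrix.mulVec_smul]
        simp
      rw [h2]
      have h3 : (ρ + δ) * x₁ j = s⁻¹ * ((ρ + δ) * z j) := by
        simp only [hx₁, Pi.smul_apply, smul_eq_mul]; ring
      rw [h3]
      exact mul_le_mul_of_nonneg_left key (inv_nonneg.2 hspos.le)
    have := hmax' (ρ + δ) x₁ hmem1
    linarith
  -- x₀ is strictly positive
  have hx₀pos : ∀ i, 0 < x₀ i := by
    intro i
    have h1 : ρ * x₀ i = (A *ᵥ x₀) i := by rw [heig]; rfl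
    nlinarith [hAx₀pos i, hx₀S.1 i]
  -- specRad A = ρ
  have hx₀ne : x₀ ≠ 0 := by
    intro h
    have := hx₀pos 0
    rw [h] at this
    simp at this
  have hρmem : ρ ∈ {r : ℝ | ∃ μ : ℂ, μ ∈ spectrum ℂ (A.map (algebraMap ℝ ℂ)) ∧ r = ‖μ‖} := by
    refine ⟨(ρ : ℂ), mem_spectrum_ofReal A hx₀ne heig, ?_⟩
    rw [Complex.norm_real, Real.norm_eq_abs, abs_of_pos hρpos]
  have hub : ∀ r ∈ {r : ℝ | ∃ μ : ℂ, μ ∈ spectrum ℂ (A.map (algebraMap ℝ ℂ)) ∧ r = ‖μ‖}, r ≤ ρ := by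
    rintro r ⟨μ, hμ, rfl⟩
    obtain ⟨v, hv, hveq⟩ := exists_eigvec_of_mem_spectrum A hμ
    set w : Fin (n+1) → ℝ := fun i => ‖v i‖ with hw
    have hwnonneg : ∀ i, 0 ≤ w i := fun i => norm_nonneg _
    have hwkey : ∀ i, ‖μ‖ * w i ≤ (A *ᵥ w) i := by
      intro i
      have h1 : ‖μ‖ * w i = ‖∑ j, (A i j : ℂ) * v j‖ := by
        rw [hveq i, norm_mul]
      rw [h1]
      calc ‖∑ j, (A i j : ℂ) * v j‖ ≤ ∑ j, ‖(A i j : ℂ) * v j‖ :=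
            norm_sum_le _ _
        _ = ∑ j, A i j * w j := by
            refine Finset.sum_congr rfl fun j _ => ?_
            rw [norm_mul, Complex.norm_real, Real.norm_eq_abs, abs_of_pos (hA i j)]
        _ = (A *ᵥ w) i := rfl
    have hwne : ∃ k, 0 < w k := by
      have : ∃ k, v k ≠ 0 := by
        by_contra h
        push_neg at h
        exact hv (funext h)
      obtain ⟨k, hk⟩ := this
      exact ⟨k, by simpa [hw] using norm_pos_iff.mpr hk⟩
    obtain ⟨k, hk⟩ := hwne
    set sw : ℝ := ∑ i, w i with hsw
    have hswpos : 0 < sw := Finset.sum_pos' (fun i _ => hwnonneg i) ⟨k, Finset.mem_univ k, hk⟩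
    set x : Fin (n+1) → ℝ := sw⁻¹ • w with hx
    have hxS : x ∈ S := by
      constructor
      · exact fun i => mul_nonneg (inv_nonneg.2 hswpos.le) (hwnonneg i)
      · simp only [hx, Pi.smul_apply, smul_eq_mul]
        rw [← Finset.mul_sum, ← hsw, inv_mul_cancel₀ hswpos.ne']
    refine hmax' ‖μ‖ x ⟨hxS, norm_nonneg μ, fun j => ?_⟩
    have h2 : (A *ᵥ x) j = sw⁻¹ * (A *ᵥ w) j := by
      rw [hx, Matrix.mulVec_smul]; rfl
    have h3 : ‖μ‖ * x j = sw⁻¹ * (‖μ‖ * w j) := by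
      simp only [hx, Pi.smul_apply, smul_eq_mul]; ring
    rw [h2, h3]
    exact mul_le_mul_of_nonneg_left (hwkey j) (inv_nonneg.2 hswpos.le)
  have hspecEq : specRad A = ρ := by
    unfold specRad
    exact le_antisymm (csSup_le ⟨ρ, hρmem⟩ hub) (le_csSup ⟨ρ, hub⟩ hρmem)
  exact ⟨x₀, hx₀pos, hspecEq ▸ hρpos, hspecEq ▸ heig⟩


theorem price_region_degenerates_at_rstar {n : ℕ}
    (M : Matrix (Fin (n + 1)) (Fin (n + 1)) ℝ) (hM : ∀ i j, 0 < M i j)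
    (hspec : specRad M = 1) :
    ∃ y : Fin (n + 1) → ℝ, (∀ i, 0 < y i) ∧ y 0 = 1 ∧ y ᵥ* M = y ∧
      {w : Fin (n + 1) → ℝ | (∀ i, 0 ≤ w i) ∧ w 0 = 1 ∧
        ∀ j, 0 ≤ (w ᵥ* (1 - M)) j} = {y} := by
  classical
  -- right Perron eigenvector
  obtain ⟨x, hxpos, _, hAx⟩ := perron_exists M hM
  rw [hspec, one_smul] at hAx
  -- left Perron eigenvector via the transpose
  have hMT : ∀ i j, 0 < Mᵀ i j := fun i j => hM j i
  obtain ⟨y', hy'pos, _, hAy⟩ := perron_exists Mᵀ hMT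
  rw [specRad_transpose, hspec, one_smul] at hAy
  have hy'M : y' ᵥ* M = y' := by
    rw [← Matrix.mulVec_transpose]
    exact hAy
  set y : Fin (n+1) → ℝ := (y' 0)⁻¹ • y' with hydef
  have hy0pos : 0 < y' 0 := hy'pos 0
  have hypos : ∀ i, 0 < y i := fun i =>
    mul_pos (inv_pos.2 hy0pos) (hy'pos i)
  have hy0 : y 0 = 1 := by
    simp only [hydef, Pi.smul_apply, smul_eq_mul]
    exact inv_mul_cancel₀ hy0pos.ne'
  have hyM : y ᵥ* M = y := by
    rw [hydef, Matrix.smul_vecMul, hy'M]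
  refine ⟨y, hypos, hy0, hyM, ?_⟩
  ext w
  simp only [Set.mem_setOf_eq, Set.mem_singleton_iff]
  constructor
  · rintro ⟨hw0, hw1, hwineq⟩
    -- first: w ᵥ* M = w
    have hd : ∀ j, 0 ≤ w j - (w ᵥ* M) j := by
      intro j
      have := hwineq j
      rwa [Matrix.vecMul_sub, Matrix.vecMul_one, Pi.sub_apply] at this
    have hsum : ∑ j, (w j - (w ᵥ* M) j) * x j = 0 := by
      have h1 : ∑ j, (w j - (w ᵥ* M) j) * x j = w ⬝ᵥ x - (w ᵥ* M) ⬝ᵥ x := by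
        simp [dotProduct, sub_mul, Finset.sum_sub_distrib]
      rw [h1, ← Matrix.dotProduct_mulVec, hAx, sub_self]
    have hzero : ∀ j, (w j - (w ᵥ* M) j) * x j = 0 := by
      have := (Finset.sum_eq_zero_iff_of_nonneg
        (fun j _ => mul_nonneg (hd j) (hxpos j).le)).1 hsum
      exact fun j => this j (Finset.mem_univ j)
    have hwM : w ᵥ* M = w := by
      funext j
      have h := hzero j
      rcases mul_eq_zero.1 h with h' | h'
      · linarith [sub_eq_zero.1 (by linarith [h'] : w j - (w ᵥ* M) j = 0)]
      · exact absurd h' (hxpos j).ne'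
    -- uniqueness via minimal ratio
    set t : ℝ := Finset.univ.inf' Finset.univ_nonempty (fun i => w i / y i) with ht
    obtain ⟨i₀, _, hi₀⟩ := Finset.exists_mem_eq_inf' Finset.univ_nonempty (fun i => w i / y i)
    set u : Fin (n+1) → ℝ := w - t • y with hu
    have hunonneg : ∀ i, 0 ≤ u i := by
      intro i
      have h1 : t ≤ w i / y i := Finset.inf'_le _ (Finset.mem_univ i)
      have h2 : t * y i ≤ w i := by
        rw [← le_div_iff₀ (hypos i)]
        exact h1
      simp only [hu, Pi.sub_apply, Pi.smul_apply, smul_eq_mul, sub_nonneg]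
      exact h2
    have hui₀ : u i₀ = 0 := by
      simp only [hu, Pi.sub_apply, Pi.smul_apply, smul_eq_mul]
      rw [ht, hi₀, div_mul_cancel₀ _ (hypos i₀).ne', sub_self]
    have huM : u ᵥ* M = u := by
      rw [hu, Matrix.sub_vecMul, Matrix.smul_vecMul, hwM, hyM]
    have huzero : u = 0 := by
      by_contra hne
      have : ∃ k, 0 < u k := by
        by_contra h
        push_neg at h
        exact hne (funext fun i => le_antisymm (h i) (hunonneg i))
      obtain ⟨k, hk⟩ := this
      have := vecMul_pos' hM hunonneg hk i₀
      rw [huM] at this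
      rw [hui₀] at this
      exact lt_irrefl 0 this
    have hwt : w = t • y := by
      have := sub_eq_zero.1 (hu ▸ huzero)
      exact this
    have ht1 : t = 1 := by
      have := congrFun hwt 0
      rw [hw1, Pi.smul_apply, hy0, smul_eq_mul, mul_one] at this
      exact this.symm
    rw [hwt, ht1, one_smul]
  · rintro rfl
    refine ⟨fun i => (hypos i).le, hy0, fun j => ?_⟩
    rw [Matrix.vecMul_sub, Matrix.vecMul_one, hyM, sub_self]
    simp
end
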